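/- arXiv:1207.6147 — 12 statements merged into one kernel-verified Lean document; each statement's English description precedes it below -/
import Mathlib

section
/- If a compact metrizable space X has a path component P which is not closed, then X is not e-closed; explicitly, with Z = {0} ∪ {1/n : n ∈ ℕ} ⊆ [0,1], there exists a sequence of maps φₙ : Z → X, each extending to a continuous map [0,1] → X, converging uniformly to a map φ : Z → X which does not extend continuously to [0,1]. -/
open Set Filter

/-- A map `f : Z → X` on a closed subspace `Z` of `Y` extends to a continuous map on `Y`. -/
def ExtendsTo {X Y : Type*} [TopologicalSpace X] [TopologicalSpace Y]
    (Z : Set Y) (f : C(Z, X)) : Prop :=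
  ∃ g : C(Y, X), ∀ z : Z, g z.1 = f z

/-- The subspace `{0} ∪ {1/n : n ∈ ℕ}` of the unit interval. -/
def NSet : Set unitInterval :=
  {z | (z : ℝ) = 0 ∨ ∃ n : ℕ, 0 < n ∧ (z : ℝ) = (n : ℝ)⁻¹}

lemma nset_eq_one {z : unitInterval} (hz : z ∈ NSet) (h : ¬ ((z : ℝ) ≤ 1/2)) : (z : ℝ) = 1 := by
  rcases hz with h0 | ⟨n, hn, he⟩
  · exfalso; apply h; rw [h0]; norm_num
  · rcases Nat.lt_or_ge n 2 with h2 | h2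
    · interval_cases n
      · simpa using he
    · exfalso
      apply h
      rw [he]
      have h2' : (2 : ℝ) ≤ n := by exact_mod_cast h2
      calc ((n:ℝ))⁻¹ ≤ (2:ℝ)⁻¹ := by
            apply inv_anti₀ (by norm_num) h2'
        _ = 1/2 := by norm_num

lemma nset_clopen : IsClopen {z : NSet | ((z : unitInterval) : ℝ) ≤ 1/2} := by
  have hc : Continuous fun z : NSet => ((z : unitInterval) : ℝ) :=
    continuous_subtype_val.comp continuous_subtype_val
  constructor
  · exact isClosed_le hc continuous_const
  · have : {z : NSet | ((z : unitInterval) : ℝ) ≤ 1/2}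
        = (fun z : NSet => ((z : unitInterval) : ℝ)) ⁻¹' (Iio (3/4)) := by
      ext z
      simp only [mem_setOf_eq, mem_preimage, mem_Iio]
      constructor
      · intro h; linarith
      · intro h
        by_contra hle
        have := nset_eq_one z.2 hle
        linarith
    rw [this]
    exact isOpen_Iio.preimage hc

open scoped Classical in
/-- The step map on `NSet`: `a` on `[0, 1/2]`, `b` at `1`. -/
noncomputable def stepMap {X : Type*} [TopologicalSpace X] (a b : X) : C(NSet, X) :=
  ⟨fun z => if ((z : unitInterval) : ℝ) ≤ 1/2 then a else b, by
    apply Continuous.if _ continuous_const continuous_const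
    intro x hx
    rw [nset_clopen.frontier_eq] at hx
    exact absurd hx (notMem_empty x)⟩

/-- If a compact metrizable space `X` has a non-closed path component, then (witnessing that
`X` is not e-closed) there is a sequence of maps `NSet → X`, each extending to `[0,1]`,
converging uniformly to a map which does not extend. -/
theorem not_eClosed_of_pathComponent_not_closed {X : Type*} [MetricSpace X] [CompactSpace X]
    (p : X) (hP : ¬ IsClosed (pathComponent p)) :
    ∃ (φ : ℕ → C(NSet, X)) (φl : C(NSet, X)),
      (∀ n, ExtendsTo NSet (φ n)) ∧
      TendstoUniformly (fun n => ⇑(φ n)) (⇑φl) atTop ∧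
      ¬ ExtendsTo NSet φl := by
  classical
  -- pick q in the closure but not in the path component
  have hsub : ¬ closure (pathComponent p) ⊆ pathComponent p := by
    intro h
    exact hP (isClosed_of_closure_subset h)
  obtain ⟨q, hq1, hq2⟩ := not_subset.mp hsub
  -- pick points pn in the path component with dist q pn < 1/(n+1)
  have hpn : ∀ n : ℕ, ∃ x ∈ pathComponent p, dist q x < 1/(n+1) := by
    intro n
    exact Metric.mem_closure_iff.mp hq1 _ (by positivity)
  choose pn hpn1 hpn2 using hpn
  refine ⟨fun n => stepMap (pn n) p, stepMap q p, ?_, ?_, ?_⟩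
  · -- each φ n extends
    intro n
    have hj : Joined (pn n) p := (hpn1 n).symm
    set γ : Path (pn n) p := hj.somePath
    refine ⟨⟨fun t => if (t : ℝ) ≤ 1/2 then pn n else γ.extend (2*(t:ℝ) - 1), ?_⟩, ?_⟩
    · apply Continuous.if ?_ continuous_const
        (γ.continuous_extend.comp (by continuity))
      intro x hx
      have hfr : frontier {t : unitInterval | (t : ℝ) ≤ 1/2} ⊆ {t : unitInterval | (t : ℝ) = 1/2} :=
        frontier_le_subset_eq continuous_subtype_val continuous_const
      have hx2 : ((x : ℝ)) = 1/2 := hfr hx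
      have : 2*(x:ℝ) - 1 = 0 := by rw [hx2]; ring
      simp [Function.comp, this]
    · intro z
      simp only [ContinuousMap.coe_mk, stepMap]
      by_cases h : ((z : unitInterval) : ℝ) ≤ 1/2
      · rw [if_pos h, if_pos h]
      · rw [if_neg h, if_neg h]
        have h1 : ((z : unitInterval) : ℝ) = 1 := nset_eq_one z.2 h
        rw [h1]
        norm_num
  · -- uniform convergence
    rw [Metric.tendstoUniformly_iff]
    intro ε hε
    obtain ⟨N, hN⟩ := exists_nat_one_div_lt hε
    filter_upwards [eventually_ge_atTop N] with n hn z
    simp only [stepMap, ContinuousMap.coe_mk]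
    by_cases h : ((z : unitInterval) : ℝ) ≤ 1/2
    · rw [if_pos h, if_pos h]
      calc dist q (pn n) < 1/(n+1) := hpn2 n
        _ ≤ 1/(N+1) := by
            apply one_div_le_one_div_of_le (by positivity)
            have hcast : (N:ℝ) ≤ n := Nat.cast_le.mpr hn
            linarith
        _ < ε := hN
    · rw [if_neg h, if_neg h, dist_self]; exact hε
  · -- the limit does not extend
    rintro ⟨g, hg⟩
    have h0 : (0 : unitInterval) ∈ NSet := Or.inl (by simp)
    have h1 : (1 : unitInterval) ∈ NSet := Or.inr ⟨1, one_pos, by simp⟩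
    have hg0 : g 0 = q := by
      have := hg ⟨0, h0⟩
      simpa [stepMap] using this
    have hg1 : g 1 = p := by
      have := hg ⟨1, h1⟩
      rw [this]
      simp only [stepMap, ContinuousMap.coe_mk]
      norm_num
    have : Joined q p := ⟨{ toContinuousMap := g, source' := hg0, target' := hg1 }⟩
    exact hq2 this.symm
end

section
/- Let X ⊆ ℝ² be the infinite comb: ({0} ∪ {1/n : n ∈ ℕ}) × [0,1] together with [0,1] × {0}, let Y = [0,1] and Z = {0} ∪ {1/n : n ∈ ℕ} ⊆ Y. Then there exists a sequence of continuous maps φₙ : Z → X, each extending continuously to [0,1], converging uniformly to the map φ(x) = (x, 1), which does not extend continuously to [0,1]. Hence X is not e-closed. -/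
open Set Filter

/-- The infinite comb. -/
def comb : Set (ℝ × ℝ) :=
  ((insert (0 : ℝ) {x | ∃ n : ℕ, 0 < n ∧ x = (n : ℝ)⁻¹}) ×ˢ Icc (0 : ℝ) 1) ∪
    (Icc (0 : ℝ) 1 ×ˢ {(0 : ℝ)})

/- Auxiliary zigzag construction. -/

noncomputable def zW (u : ℝ) : ℝ := min 1 (max 0 (3 * u - 1)) - u

noncomputable def zC (s : ℝ) : ℝ := s + zW (Int.fract s)

noncomputable def zY (u : ℝ) : ℝ := max 0 (3 * |u - 1/2| - 1/2)

noncomputable def zH (s : ℝ) : ℝ × ℝ := ((zC s)⁻¹, zY (Int.fract s))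

lemma zW_cont : Continuous zW := by
  unfold zW; fun_prop

lemma zC_cont : Continuous zC := by
  unfold zC
  exact continuous_id.add
    (ContinuousOn.comp_fract'' zW_cont.continuousOn (by norm_num [zW]))

lemma zYf_cont : Continuous fun s => zY (Int.fract s) := by
  have h : Continuous zY := by unfold zY; fun_prop
  exact ContinuousOn.comp_fract'' h.continuousOn (by norm_num [zY, abs_of_nonneg, abs_of_nonpos])

lemma one_le_zC {s : ℝ} (hs : 1 ≤ s) : 1 ≤ zC s := by
  have h1 : (1 : ℝ) ≤ (⌊s⌋ : ℝ) := by exact_mod_cast Int.le_floor.mpr (by exact_mod_cast hs)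
  have h2 : (⌊s⌋ : ℝ) = s - Int.fract s := by rw [Int.fract]; ring
  have h3 : 0 ≤ min 1 (max 0 (3 * Int.fract s - 1)) :=
    le_min zero_le_one (le_max_left _ _)
  simp only [zC, zW]
  nlinarith

lemma zH_mem {s : ℝ} (hs : 1 ≤ s) : zH s ∈ comb := by
  have h1 : (1 : ℝ) ≤ (⌊s⌋ : ℝ) := by exact_mod_cast Int.le_floor.mpr (by exact_mod_cast hs)
  have hfl : (⌊s⌋ : ℝ) = s - Int.fract s := by rw [Int.fract]; ring
  have hfl1 : 1 ≤ ⌊s⌋ := by exact_mod_cast h1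
  have hcast : ((⌊s⌋.toNat : ℕ) : ℝ) = (⌊s⌋ : ℝ) := by
    have h5 : ((⌊s⌋.toNat : ℕ) : ℤ) = ⌊s⌋ := Int.toNat_of_nonneg (by omega)
    exact_mod_cast h5
  set u := Int.fract s with hu
  have hu0 : 0 ≤ u := Int.fract_nonneg s
  have hu1 : u < 1 := Int.fract_lt_one s
  rcases le_or_gt u (1/3) with h | h
  · -- on the tooth x = 1/⌊s⌋
    have hw : zW u = -u := by
      have hmx : max 0 (3 * u - 1) = 0 := max_eq_left (by linarith)
      simp [zW, hmx, min_eq_right (zero_le_one)]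
    have hc : zC s = ((⌊s⌋.toNat : ℕ) : ℝ) := by
      rw [hcast]; simp only [zC, ← hu, hw, hfl]; ring
    have hy' : zY u ∈ Icc (0:ℝ) 1 := by
      have habs : |u - 1/2| = 1/2 - u := by rw [abs_of_nonpos (by linarith)]; ring
      refine ⟨le_max_left _ _, ?_⟩
      simp only [zY, habs]
      apply max_le <;> linarith
    have hH : zH s = (((⌊s⌋.toNat : ℕ) : ℝ)⁻¹, zY u) := by rw [zH, hc, ← hu]
    rw [comb, hH]
    left
    rw [mem_prod]
    exact ⟨Or.inr ⟨⌊s⌋.toNat, by omega, rfl⟩, hy'⟩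
  rcases le_or_gt u (2/3) with h2 | h2
  · -- on the base
    have hcpos : 1 ≤ zC s := one_le_zC hs
    have hy : zY u = 0 := by
      have habs : |u - 1/2| ≤ 1/6 := abs_le.mpr ⟨by linarith, by linarith⟩
      exact max_eq_left (by linarith [habs])
    have hH : zH s = ((zC s)⁻¹, 0) := by rw [zH, ← hu, hy]
    rw [comb, hH]
    right
    rw [mem_prod]
    refine ⟨⟨inv_nonneg.mpr (by linarith), inv_le_one_of_one_le₀ hcpos⟩, rfl⟩
  · -- on the tooth x = 1/(⌊s⌋+1)
    have hw : zW u = 1 - u := by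
      have h3 : max 0 (3 * u - 1) = 3 * u - 1 := max_eq_right (by linarith)
      have h4 : min 1 (3 * u - 1) = 1 := min_eq_left (by linarith)
      simp [zW, h3, h4]
    have hc : zC s = ((⌊s⌋.toNat + 1 : ℕ) : ℝ) := by
      push_cast
      rw [hcast]
      simp only [zC, ← hu, hw, hfl]; ring
    have hy' : zY u ∈ Icc (0:ℝ) 1 := by
      have habs : |u - 1/2| = u - 1/2 := abs_of_nonneg (by linarith)
      refine ⟨le_max_left _ _, ?_⟩
      simp only [zY, habs]
      apply max_le <;> linarith
    have hH : zH s = (((⌊s⌋.toNat + 1 : ℕ) : ℝ)⁻¹, zY u) := by rw [zH, hc, ← hu]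
    rw [comb, hH]
    left
    rw [mem_prod]
    exact ⟨Or.inr ⟨⌊s⌋.toNat + 1, by omega, rfl⟩, hy'⟩

lemma zH_nat (k : ℕ) : zH k = ((k : ℝ)⁻¹, 1) := by
  have h : Int.fract (k : ℝ) = 0 := Int.fract_natCast k
  simp only [zH, zC, h]
  norm_num [zW, zY, abs_of_nonpos]

lemma inv_succ_mem {n : ℕ} : ((n : ℝ) + 1)⁻¹ ∈ Icc (0:ℝ) 1 := by
  constructor
  · positivity
  · apply inv_le_one_of_one_le₀; linarith [Nat.cast_nonneg (α := ℝ) n]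

lemma one_le_maxinv (n : ℕ) (y : unitInterval) :
    1 ≤ (max (y : ℝ) ((n : ℝ) + 1)⁻¹)⁻¹ := by
  rw [one_le_inv_iff₀]
  exact ⟨lt_max_of_lt_right (by positivity), max_le y.2.2 inv_succ_mem.2⟩

/-- The extension maps. -/
noncomputable def gmap (n : ℕ) : C(unitInterval, comb) := by
  refine ⟨fun y : unitInterval =>
    ⟨zH ((max (y : ℝ) ((n : ℝ) + 1)⁻¹)⁻¹), zH_mem (one_le_maxinv n y)⟩, ?_⟩
  apply Continuous.subtype_mk
  have hm : Continuous fun y : unitInterval => (max (y : ℝ) ((n : ℝ) + 1)⁻¹)⁻¹ := by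
    apply Continuous.inv₀ (continuous_subtype_val.max continuous_const)
    intro y
    exact ne_of_gt (lt_max_of_lt_right (by positivity))
  show Continuous fun y : unitInterval => zH ((max (y : ℝ) ((n : ℝ) + 1)⁻¹)⁻¹)
  simp only [zH]
  refine Continuous.prodMk ?_ (zYf_cont.comp hm)
  apply Continuous.inv₀ (zC_cont.comp hm)
  intro y
  exact ne_of_gt (lt_of_lt_of_le one_pos (one_le_zC (one_le_maxinv n y)))

lemma gmap_small (n : ℕ) (y : unitInterval) (hy : (y : ℝ) ≤ ((n : ℝ) + 1)⁻¹) :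
    ((gmap n y : ℝ × ℝ)) = (((n : ℝ) + 1)⁻¹, 1) := by
  have hmax : (max (y : ℝ) ((n : ℝ) + 1)⁻¹) = ((n : ℝ) + 1)⁻¹ := max_eq_right hy
  have h2 : zH ((n : ℝ) + 1) = (((n : ℝ) + 1)⁻¹, 1) := by
    have := zH_nat (n + 1)
    push_cast at this
    exact this
  show zH ((max (y : ℝ) ((n : ℝ) + 1)⁻¹)⁻¹) = _
  rw [hmax, inv_inv, h2]

lemma gmap_inv (n k : ℕ) (y : unitInterval) (hy : (y : ℝ) = (k : ℝ)⁻¹)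
    (h2 : ((n : ℝ) + 1)⁻¹ ≤ (y : ℝ)) : ((gmap n y : ℝ × ℝ)) = ((k : ℝ)⁻¹, 1) := by
  have hmax : (max (y : ℝ) ((n : ℝ) + 1)⁻¹) = (k : ℝ)⁻¹ := by rw [max_eq_left h2, hy]
  show zH ((max (y : ℝ) ((n : ℝ) + 1)⁻¹)⁻¹) = _
  rw [hmax, inv_inv, zH_nat k]

/-- The infinite comb is not e-closed: the map `φ(x) = (x,1)` on `{0} ∪ {1/n}` is a uniform
limit of maps extending to `[0,1]`, but does not itself extend to `[0,1]`. -/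
theorem comb_not_eClosed (φl : C(NSet, comb))
    (hφl : ∀ z : NSet, (φl z : ℝ × ℝ) = ((z.1 : ℝ), 1)) :
    (∃ φ : ℕ → C(NSet, comb),
      (∀ n, ExtendsTo NSet (φ n)) ∧
      TendstoUniformly (fun n => ⇑(φ n)) (⇑φl) atTop) ∧
    ¬ ExtendsTo NSet φl := by
  constructor
  · refine ⟨fun n => ⟨fun z => gmap n z.1, (map_continuous (gmap n)).comp continuous_subtype_val⟩,
      fun n => ⟨gmap n, fun z => rfl⟩, ?_⟩
    rw [Metric.tendstoUniformly_iff]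
    intro ε hε
    obtain ⟨N, hN⟩ := exists_nat_gt ε⁻¹
    filter_upwards [eventually_ge_atTop N] with n hn z
    have key : dist (φl z) (gmap n z.1) ≤ ((n : ℝ) + 1)⁻¹ := by
      rw [Subtype.dist_eq, hφl z]
      rcases le_or_gt (z.1 : ℝ) (((n : ℝ) + 1)⁻¹) with h | h
      · rw [gmap_small n z.1 h, Prod.dist_eq]
        simp only [dist_self, Real.dist_eq]
        have h0 : (0:ℝ) ≤ (z.1 : ℝ) := z.1.2.1
        rw [abs_of_nonpos (by linarith)]
        apply max_le (by linarith) (by positivity)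
      · rcases z.2 with h0 | ⟨k, hk, hzk⟩
        · exfalso; rw [h0] at h
          exact absurd h (not_lt.mpr (by positivity))
        · rw [gmap_inv n k z.1 hzk (le_of_lt h), ← hzk]
          simp only [dist_self]
          positivity
    refine lt_of_le_of_lt key ?_
    have hn1 : ε⁻¹ < (n : ℝ) + 1 := by
      have : (N : ℝ) ≤ n := by exact_mod_cast hn
      linarith
    have := (inv_lt_inv₀ (by positivity) (by positivity : (0:ℝ) < ε⁻¹)).mpr hn1
    rwa [inv_inv] at this
  · rintro ⟨g, hg⟩
    have h0mem : ((0 : unitInterval)) ∈ NSet := Or.inl rfl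
    have hg0 : ((g 0 : ℝ × ℝ)) = (0, 1) := by
      have h := hg ⟨0, h0mem⟩
      show ((g ((⟨0, h0mem⟩ : NSet) : unitInterval) : ℝ × ℝ)) = (0, 1)
      rw [h, hφl]
      norm_num
    have hcont := (map_continuous g).continuousAt (x := (0 : unitInterval))
    rw [Metric.continuousAt_iff] at hcont
    obtain ⟨δ, hδ, hδ2⟩ := hcont (1/2) (by norm_num)
    obtain ⟨k, hk⟩ := exists_nat_one_div_lt hδ
    set K : ℕ := k + 1 with hK
    have hKpos : (0:ℝ) < K := by positivity
    set a : ℝ := ((K : ℝ) + 1)⁻¹ with ha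
    set b : ℝ := (K : ℝ)⁻¹ with hb
    have hab : a < b := by
      rw [ha, hb, inv_lt_inv₀ (by positivity) (by positivity)]
      linarith
    have ha01 : a ∈ Icc (0:ℝ) 1 := by
      constructor
      · positivity
      · rw [ha]; apply inv_le_one_of_one_le₀; linarith
    have hb01 : b ∈ Icc (0:ℝ) 1 := by
      constructor
      · positivity
      · rw [hb]; apply inv_le_one_of_one_le₀
        rw [hK]; push_cast; linarith [Nat.cast_nonneg (α := ℝ) k]
    set F : ℝ → ℝ := fun y => ((g (projIcc 0 1 zero_le_one y) : ℝ × ℝ)).1 with hF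
    have hFc : Continuous F := by
      apply Continuous.fst
      exact continuous_subtype_val.comp ((map_continuous g).comp continuous_projIcc)
    have hFval : ∀ (y : ℝ) (hy : y ∈ Icc (0:ℝ) 1),
        (⟨y, hy⟩ : unitInterval) ∈ NSet → F y = y := by
      intro y hy hz
      have hproj : projIcc 0 1 zero_le_one y = ⟨y, hy⟩ := projIcc_of_mem zero_le_one hy
      have h2 := hg ⟨⟨y, hy⟩, hz⟩
      rw [hF]
      simp only [hproj]
      show ((g ((⟨⟨y, hy⟩, hz⟩ : NSet) : unitInterval) : ℝ × ℝ)).1 = y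
      rw [h2, hφl]
    have haN : (⟨a, ha01⟩ : unitInterval) ∈ NSet := by
      refine Or.inr ⟨K + 1, by omega, ?_⟩
      show a = ((K + 1 : ℕ) : ℝ)⁻¹
      rw [ha]; push_cast; ring_nf
    have hbN : (⟨b, hb01⟩ : unitInterval) ∈ NSet := by
      refine Or.inr ⟨K, by omega, ?_⟩
      show b = ((K : ℕ) : ℝ)⁻¹
      rw [hb]
    have haF : F a = a := hFval a ha01 haN
    have hbF : F b = b := hFval b hb01 hbN
    set c : ℝ := (a + b) / 2 with hc
    have hcmem : c ∈ Icc (F a) (F b) := by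
      rw [haF, hbF]; exact ⟨by rw [hc]; linarith, by rw [hc]; linarith⟩
    obtain ⟨y, hy, hFy⟩ := intermediate_value_Icc (le_of_lt hab) hFc.continuousOn hcmem
    have hy01 : y ∈ Icc (0:ℝ) 1 := ⟨le_trans ha01.1 hy.1, le_trans hy.2 hb01.2⟩
    have hproj : projIcc 0 1 zero_le_one y = ⟨y, hy01⟩ := projIcc_of_mem zero_le_one hy01
    set yb : unitInterval := ⟨y, hy01⟩ with hyb
    have hfst : ((g yb : ℝ × ℝ)).1 = c := by
      rw [← hFy, hF]
      simp only [hproj]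
    have hd : dist yb (0 : unitInterval) < δ := by
      rw [Subtype.dist_eq, Real.dist_eq]
      show |y - ((0 : unitInterval) : ℝ)| < δ
      have h00 : ((0 : unitInterval) : ℝ) = 0 := rfl
      rw [h00, sub_zero, abs_of_nonneg hy01.1]
      calc y ≤ b := hy.2
        _ = 1 / (k + 1) := by rw [hb, hK]; push_cast; rw [one_div]
        _ < δ := hk
    have hclose := hδ2 hd
    rw [Subtype.dist_eq, hg0, Prod.dist_eq] at hclose
    have hsnd : (1:ℝ)/2 < ((g yb : ℝ × ℝ)).2 := by
      have h3 := lt_of_le_of_lt (le_max_right _ _) hclose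
      rw [Real.dist_eq, abs_sub_lt_iff] at h3
      linarith [h3.2]
    have hmem := (g yb).2
    rcases hmem with hmem | hmem
    · rcases hmem.1 with h1 | ⟨m, hm, h1⟩
      · rw [hfst] at h1
        have hcpos : (0:ℝ) < c := by
          rw [hc]; have := ha01.1; have : (0:ℝ) < a := by rw [ha]; positivity
          linarith
        rw [h1] at hcpos; exact lt_irrefl _ hcpos
      · rw [hfst] at h1
        have hcb : c < b := by rw [hc]; linarith
        have hac : a < c := by rw [hc]; linarith
        have hmpos : (0:ℝ) < m := by exact_mod_cast hm
        have hmK : (K:ℝ) < (m:ℝ) := by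
          rw [h1] at hcb
          exact (inv_lt_inv₀ hmpos hKpos).mp hcb
        have hmK' : K + 1 ≤ m := by exact_mod_cast hmK
        have hle : (m:ℝ)⁻¹ ≤ a := by
          rw [ha]
          have hKm : ((K:ℝ) + 1) ≤ (m:ℝ) := by exact_mod_cast hmK'
          exact inv_anti₀ (by positivity) hKm
        rw [← h1] at hle
        linarith
    · have hb0 : ((g yb : ℝ × ℝ)).2 = 0 := hmem.2
      linarith
end

section
/- The one-point compactification ℕ† of the discrete space ℕ is not e-open: with Y = [0,1] and Z = {0} ∪ {1/n : n ∈ ℕ}, the maps φₙ : Z → ℕ† defined by φₙ(1/k) = n + k and φₙ(0) = ∞ converge uniformly to the constant map at ∞, which extends continuously to [0,1], yet no φₙ extends continuously to [0,1]. -/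
open Set Filter Topology

/-- `ℕ†` is not e-open: the maps `φₙ(1/k) = n + k`, `φₙ(0) = ∞` converge (uniformly, i.e. in
the compact-open topology) to the constant map at `∞`, which extends to `[0,1]`, yet no `φₙ`
extends to `[0,1]`. -/
theorem onePoint_nat_not_eOpen (φ : ℕ → C(NSet, OnePoint ℕ))
    (hφinf : ∀ n, ∀ z : NSet, (z.1 : ℝ) = 0 → φ n z = OnePoint.infty)
    (hφ : ∀ n, ∀ k : ℕ, 0 < k → ∀ z : NSet, (z.1 : ℝ) = (k : ℝ)⁻¹ →
      φ n z = ((n + k : ℕ) : OnePoint ℕ)) :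
    Tendsto φ atTop (𝓝 (ContinuousMap.const NSet OnePoint.infty)) ∧
    ExtendsTo NSet (ContinuousMap.const NSet (OnePoint.infty : OnePoint ℕ)) ∧
    ∀ n, ¬ ExtendsTo NSet (φ n) := by
  refine ⟨?_, ⟨ContinuousMap.const _ OnePoint.infty, fun z => rfl⟩, ?_⟩
  · rw [ContinuousMap.tendsto_nhds_compactOpen]
    intro K hK U hU hgU
    rcases K.eq_empty_or_nonempty with rfl | ⟨z, hz⟩
    · filter_upwards with n using mapsTo_empty _ _
    · have hinf : OnePoint.infty ∈ U := hgU hz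
      have hfin : (((↑) : ℕ → OnePoint ℕ) ⁻¹' U)ᶜ.Finite := by
        have := ((OnePoint.isOpen_iff_of_mem hinf).mp hU).2
        exact this.finite_of_discrete
      obtain ⟨N, hN⟩ := hfin.bddAbove
      filter_upwards [eventually_ge_atTop (N + 1)] with n hn w hw
      rcases w.2 with h0 | ⟨k, hk, hkval⟩
      · rw [hφinf n w h0]; exact hinf
      · rw [hφ n k hk w hkval]
        by_contra hmem
        have : n + k ≤ N := hN hmem
        omega
  · rintro n ⟨g, hg⟩
    have h1mem : (1 : unitInterval) ∈ NSet := Or.inr ⟨1, one_pos, by norm_num⟩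
    have h2u : (2:ℝ)⁻¹ ∈ unitInterval := ⟨by norm_num, by norm_num⟩
    have h2mem : (⟨(2:ℝ)⁻¹, h2u⟩ : unitInterval) ∈ NSet := Or.inr ⟨2, two_pos, by norm_num⟩
    have hg1 : g 1 = ((n + 1 : ℕ) : OnePoint ℕ) := by
      rw [hg ⟨1, h1mem⟩, hφ n 1 one_pos ⟨1, h1mem⟩ (by norm_num)]
    have hg2 : g ⟨(2:ℝ)⁻¹, h2u⟩ = ((n + 2 : ℕ) : OnePoint ℕ) := by
      rw [hg ⟨_, h2mem⟩, hφ n 2 two_pos ⟨_, h2mem⟩ (by norm_num)]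
    have hopen : IsOpen ({((n+1 : ℕ) : OnePoint ℕ)} : Set (OnePoint ℕ)) := by
      have := OnePoint.isOpenEmbedding_coe (X := ℕ) |>.isOpenMap {n+1} (isOpen_discrete _)
      rwa [image_singleton] at this
    have hclopen : IsClopen (g ⁻¹' {((n+1 : ℕ) : OnePoint ℕ)}) :=
      ⟨(isClosed_singleton).preimage g.continuous, hopen.preimage g.continuous⟩
    rcases isClopen_iff.mp hclopen with he | hu
    · have h1 : (1 : unitInterval) ∈ g ⁻¹' {((n+1 : ℕ) : OnePoint ℕ)} := by
        simp [mem_preimage, hg1]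
      rw [he] at h1
      exact h1
    · have h2 : (⟨(2:ℝ)⁻¹, h2u⟩ : unitInterval) ∈ g ⁻¹' {((n+1 : ℕ) : OnePoint ℕ)} :=
        hu ▸ mem_univ _
      rw [mem_preimage, hg2, mem_singleton_iff, OnePoint.coe_eq_coe] at h2
      omega
end

section
/- The one-point compactification ℕ† of the discrete space ℕ is e-closed: for every compact metrizable space Y, closed subspace Z ⊆ Y, and sequence of continuous maps φₙ : Z → ℕ† converging uniformly to a continuous map φ, if each φₙ extends to a continuous map Y → ℕ†, then φ extends to a continuous map Y → ℕ†. -/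
/-!
Points of `ℕ` are clopen in `ℕ†`. As `Z` is compact, compact-open convergence makes each fibre
`φl ⁻¹' {k}` a fibre of some `φₙ`, so an extension of `φₙ` shows that it is the trace on `Z` of a
clopen set `W k ⊆ Y`. Disjointifying the `W k` keeps them clopen and keeps their traces, since the
fibres of `φl` are disjoint. Sending `disjointed W k` to `k` and the rest of `Y` to `∞` is then
continuous, because a neighbourhood of `∞` misses only finitely many points of `ℕ`.
-/

open Set Filter Topology

open Function
open scoped OnePoint

theorem Set.preimage_disjointed {α β ι : Type*} [Preorder ι] [LocallyFiniteOrderBot ι]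
    (f : α → β) (s : ι → Set β) (i : ι) :
    f ⁻¹' disjointed s i = disjointed (fun j ↦ f ⁻¹' s j) i := by
  simp only [disjointed_eq_inter_compl, preimage_inter, preimage_iInter, preimage_compl]

theorem IsClopen.disjointed {X ι : Type*} [TopologicalSpace X] [Preorder ι]
    [LocallyFiniteOrderBot ι] {s : ι → Set X} (hs : ∀ i, IsClopen (s i)) (i : ι) :
    IsClopen (disjointed s i) := by
  rw [disjointed_apply, Finset.sup_set_eq_biUnion]
  exact (hs i).diff (isClopen_biUnion_finset fun j _ ↦ hs j)

namespace OnePoint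

variable {X : Type*}

theorem isClopen_singleton_coe [TopologicalSpace X] [DiscreteTopology X] (x : X) :
    IsClopen {(x : OnePoint X)} :=
  ⟨isClosed_singleton, by rw [← image_singleton, isOpen_image_coe]; exact isOpen_discrete _⟩

theorem preimage_eq_biUnion_preimage_singleton_coe {Y : Type*} (f : Y → OnePoint X)
    {s : Set (OnePoint X)} (hs : ∞ ∉ s) :
    f ⁻¹' s = ⋃ x ∈ ((↑) : X → OnePoint X) ⁻¹' s, f ⁻¹' {(x : OnePoint X)} := by
  ext y
  induction h : f y using OnePoint.rec <;> simp_all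

theorem continuous_of_isClopen_preimage_singleton_coe [TopologicalSpace X] [DiscreteTopology X]
    {Y : Type*} [TopologicalSpace Y] {f : Y → OnePoint X}
    (hf : ∀ x : X, IsClopen (f ⁻¹' {(x : OnePoint X)})) : Continuous f := by
  refine continuous_def.2 fun U hU ↦ ?_
  by_cases hU_infty : ∞ ∈ U
  · have hfin : (((↑) : X → OnePoint X) ⁻¹' U)ᶜ.Finite :=
      ((isOpen_iff_of_mem hU_infty).1 hU).2.finite_of_discrete
    rw [← isClosed_compl_iff, ← preimage_compl,
      preimage_eq_biUnion_preimage_singleton_coe f (not_not.2 hU_infty)]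
    exact hfin.isClosed_biUnion fun x _ ↦ (hf x).isClosed
  · rw [preimage_eq_biUnion_preimage_singleton_coe f hU_infty]
    exact isOpen_biUnion fun x _ ↦ (hf x).isOpen

theorem eq_of_forall_eq_coe_iff {a b : OnePoint X} (h : ∀ x : X, a = x ↔ b = x) : a = b :=
  Option.ext h

theorem exists_continuousMap_eq_coe_iff_mem [TopologicalSpace X] [DiscreteTopology X]
    {Y : Type*} [TopologicalSpace Y] {V : X → Set Y} (hV : Pairwise (Disjoint on V))
    (hV_clopen : ∀ x, IsClopen (V x)) :
    ∃ g : C(Y, OnePoint X), ∀ (y : Y) (x : X), g y = x ↔ y ∈ V x := by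
  classical
  let g : Y → OnePoint X := fun y ↦ if h : ∃ x, y ∈ V x then ↑h.choose else ∞
  have hg : ∀ (y : Y) (x : X), g y = x ↔ y ∈ V x := by
    intro y x
    by_cases h : ∃ x, y ∈ V x
    · simp only [g, dif_pos h, coe_eq_coe]
      exact ⟨fun hx ↦ hx ▸ h.choose_spec,
        fun hy ↦ hV.eq (not_disjoint_iff.2 ⟨y, h.choose_spec, hy⟩)⟩
    · simp only [g, dif_neg h, infty_ne_coe, false_iff]
      exact fun hy ↦ h ⟨x, hy⟩
  refine ⟨⟨g, continuous_of_isClopen_preimage_singleton_coe fun x ↦ ?_⟩, hg⟩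
  convert hV_clopen x using 1
  exact Set.ext fun y ↦ hg y x

end OnePoint

theorem ContinuousMap.eventually_preimage_eq_of_tendsto {ι X Y : Type*} [TopologicalSpace X]
    [CompactSpace X] [TopologicalSpace Y] {l : Filter ι} {F : ι → C(X, Y)} {f : C(X, Y)}
    (hF : Tendsto F l (𝓝 f)) {K : Set Y} (hK : IsClopen K) :
    ∀ᶠ i in l, F i ⁻¹' K = f ⁻¹' K := by
  have h_in := tendsto_nhds_compactOpen.1 hF _ (hK.isClosed.preimage f.continuous).isCompact
    K hK.isOpen (mapsTo_preimage f K)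
  have h_out := tendsto_nhds_compactOpen.1 hF _
    (hK.isOpen.isClosed_compl.preimage f.continuous).isCompact Kᶜ hK.isClosed.isOpen_compl
    (mapsTo_preimage f Kᶜ)
  filter_upwards [h_in, h_out] with i hi_in hi_out
  exact Set.ext fun x ↦ ⟨fun hx ↦ not_not.1 fun hfx ↦ hi_out hfx hx, fun hx ↦ hi_in hx⟩

theorem ExtendsTo.exists_isClopen_preimage_val_eq {X Y : Type*} [TopologicalSpace X]
    [TopologicalSpace Y] {Z : Set Y} {f : C(Z, X)} (hf : ExtendsTo Z f) {K : Set X}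
    (hK : IsClopen K) : ∃ W : Set Y, IsClopen W ∧ (↑) ⁻¹' W = f ⁻¹' K := by
  obtain ⟨g, hg⟩ := hf
  exact ⟨g ⁻¹' K, hK.preimage g.continuous, Set.ext fun z ↦ by simp [hg]⟩

/-- The one-point compactification `ℕ†` of discrete `ℕ` is e-closed: a uniform limit (i.e. a
limit in the compact-open topology) of extendible maps into `ℕ†` is extendible. -/
theorem onePoint_nat_eClosed {Y : Type*} [MetricSpace Y] [CompactSpace Y]
    (Z : Set Y) (hZ : IsClosed Z)
    (φ : ℕ → C(Z, OnePoint ℕ)) (φl : C(Z, OnePoint ℕ))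
    (hconv : Tendsto φ atTop (𝓝 φl))
    (hext : ∀ n, ExtendsTo Z (φ n)) :
    ExtendsTo Z φl := by
  have : CompactSpace Z := isCompact_iff_compactSpace.1 hZ.isCompact
  have h_fiber : ∀ k : ℕ,
      ∃ W : Set Y, IsClopen W ∧ (↑) ⁻¹' W = φl ⁻¹' {(k : OnePoint ℕ)} := by
    intro k
    have hk := OnePoint.isClopen_singleton_coe k
    obtain ⟨n, hn⟩ := (ContinuousMap.eventually_preimage_eq_of_tendsto hconv hk).exists
    exact hn ▸ (hext n).exists_isClopen_preimage_val_eq hk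
  choose W hW_clopen hW_fiber using h_fiber
  obtain ⟨g, hg⟩ := OnePoint.exists_continuousMap_eq_coe_iff_mem (disjoint_disjointed W)
    (IsClopen.disjointed hW_clopen)
  refine ⟨g, fun z ↦ OnePoint.eq_of_forall_eq_coe_iff fun k ↦ ?_⟩
  have h_fibers_disjoint :
      ∀ j < k, Disjoint (φl ⁻¹' {(j : OnePoint ℕ)}) (φl ⁻¹' {(k : OnePoint ℕ)}) :=
    fun j hj ↦ (disjoint_singleton.2 (OnePoint.coe_injective.ne hj.ne)).preimage φl
  rw [hg, ← mem_preimage, preimage_disjointed, funext hW_fiber,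
    disjointed_eq_self h_fibers_disjoint]
  rfl
end

section
/- If X is an e-open compact metrizable space, then every path component of X is open; in particular, X is locally path-connected. -/
open Set Filter

/-- `X` is e-open: for every compact metrizable `Y` and closed `Z ⊆ Y`, the set of maps
`Z → X` extending to `Y` is open in `C(Z, X)` (compact-open = uniform convergence topology). -/
def EOpen (X : Type*) [TopologicalSpace X] : Prop :=
  ∀ (Y : Type) [MetricSpace Y] [CompactSpace Y] (Z : Set Y), IsClosed Z →
    IsOpen {f : C(Z, X) | ExtendsTo Z f}

/-!
Let `yₙ → p` in `X`. On the closed subset `{∞} × I ∪ S × {0, 1}` of `S × I`, `S = OnePoint ℕ`,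
consider the map that is `yₙ` at `(n, 1)` and `p` everywhere else. If all `yₙ` are close to `p`,
this map is uniformly close to the constant map `p`, which extends to `S × I`; by e-openness it
extends too. The extension is `p` on `{∞} × I`, so by the tube lemma, for large `n` its restriction
to `{n} × I` is a path from `p` to `yₙ` inside any given neighbourhood of `p`. Hence `p` is joined
within each of its neighbourhoods to all nearby points: `X` is locally path-connected.
-/

open Topology Metric unitInterval OnePoint

section Frame

variable {S X : Type*} [TopologicalSpace S] [TopologicalSpace X]

def frame (s₀ : S) : Set (S × I) := {s₀} ×ˢ univ ∪ univ ×ˢ {0} ∪ univ ×ˢ {1}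

lemma isClosed_frame [T1Space S] (s₀ : S) : IsClosed (frame s₀) :=
  ((isClosed_singleton.prod isClosed_univ).union (isClosed_univ.prod isClosed_singleton)).union
    (isClosed_univ.prod isClosed_singleton)

instance [T1Space S] [CompactSpace S] (s₀ : S) : CompactSpace (frame s₀) :=
  isCompact_iff_compactSpace.mp (isClosed_frame s₀).isCompact

lemma continuousOn_frame [T1Space S] (g : C(S, X)) (s₀ : S) :
    ContinuousOn (fun q : S × I => if q.2 = 1 then g q.1 else g s₀) (frame s₀) := by
  have hside : IsClosed ({s₀} ×ˢ univ : Set (S × I)) := isClosed_singleton.prod isClosed_univ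
  have hbottom : IsClosed (univ ×ˢ {0} : Set (S × I)) := isClosed_univ.prod isClosed_singleton
  have htop : IsClosed (univ ×ˢ {1} : Set (S × I)) := isClosed_univ.prod isClosed_singleton
  refine .union_of_isClosed (.union_of_isClosed ?_ ?_ hside hbottom) ?_ (hside.union hbottom) htop
  · refine (continuousOn_const (c := g s₀)).congr fun q hq => ?_
    simp_all
  · refine (continuousOn_const (c := g s₀)).congr fun q hq => ?_
    simp_all
  · refine (g.continuous.comp continuous_fst).continuousOn.congr fun q hq => ?_
    simp_all

noncomputable def frameMap [T1Space S] (g : C(S, X)) (s₀ : S) : C(frame s₀, X) :=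
  ⟨_, (continuousOn_frame g s₀).domRestrict⟩

lemma frameMap_apply [T1Space S] (g : C(S, X)) (s₀ : S) (q : frame s₀) :
    frameMap g s₀ q = if q.1.2 = 1 then g q.1.1 else g s₀ :=
  rfl

lemma eventually_joinedIn_of_extendsTo_frameMap [T1Space S] {g : C(S, X)} {s₀ : S}
    (h : ExtendsTo (frame s₀) (frameMap g s₀)) {U : Set X} (hU : U ∈ 𝓝 (g s₀)) :
    ∀ᶠ s in 𝓝 s₀, JoinedIn U (g s₀) (g s) := by
  obtain ⟨G, hG⟩ := h
  have hside : ∀ t, G (s₀, t) = g s₀ := fun t => by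
    simpa [frameMap_apply] using hG ⟨(s₀, t), by simp [frame]⟩
  have htube : ∀ᶠ s in 𝓝 s₀, ∀ t ∈ (univ : Set I), G (s, t) ∈ U :=
    isCompact_univ.eventually_forall_of_forall_eventually fun t _ =>
      G.continuous.continuousAt.eventually_mem ((hside t).symm ▸ hU)
  refine htube.mono fun s hs => ⟨⟨⟨fun t => G (s, t), by fun_prop⟩, ?_, ?_⟩, fun t => hs t trivial⟩
  · simpa [frameMap_apply] using hG ⟨(s, 0), by simp [frame]⟩
  · simpa [frameMap_apply] using hG ⟨(s, 1), by simp [frame]⟩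

end Frame

lemma dist_frameMap_const_lt {S X : Type*} [TopologicalSpace S] [T1Space S] [CompactSpace S]
    [PseudoMetricSpace X] (g : C(S, X)) (s₀ : S) {δ : ℝ} (hδ : 0 < δ) (hg : ∀ s, dist (g s) (g s₀) < δ) :
    dist (frameMap g s₀) (ContinuousMap.const _ (g s₀)) < δ := by
  refine (ContinuousMap.dist_lt_iff hδ).mpr fun q => ?_
  rw [frameMap_apply]
  split_ifs
  · exact hg _
  · simpa using hδ

lemma EOpen.eventually_joinedIn {X : Type*} [PseudoMetricSpace X] (hX : EOpen X) {p : X}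
    {U : Set X} (hU : U ∈ 𝓝 p) : ∀ᶠ y in 𝓝 p, JoinedIn U p y := by
  let _ : MetricSpace (OnePoint ℕ × I) := TopologicalSpace.metrizableSpaceMetric _
  have hconst : ContinuousMap.const (frame (∞ : OnePoint ℕ)) p ∈ {f | ExtendsTo _ f} :=
    ⟨ContinuousMap.const _ p, fun _ => rfl⟩
  obtain ⟨δ, hδ, hball⟩ := Metric.isOpen_iff.mp (hX _ _ (isClosed_frame ∞)) _ hconst
  by_contra h
  obtain ⟨y, hy_lim, hy⟩ :=
    exists_seq_forall_of_frequently ((not_eventually.mp h).and_eventually (ball_mem_nhds p hδ))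
  let g := continuousMapMkNat y p hy_lim
  have hg : ∀ s, dist (g s) (g ∞) < δ := fun s => by
    cases s with
    | infty => simpa using hδ
    | coe n => exact (hy n).2
  have hext : ExtendsTo _ (frameMap g ∞) := hball (dist_frameMap_const_lt g ∞ hδ hg)
  have hcoe : Tendsto (fun n : ℕ => (n : OnePoint ℕ)) atTop (𝓝 ∞) :=
    (continuous_iff_from_nat id).mp continuous_id
  obtain ⟨n, hn⟩ := (hcoe.eventually (eventually_joinedIn_of_extendsTo_frameMap hext hU)).exists
  exact (hy n).1 hn

theorem eOpen_pathComponents_open_general {X : Type*} [MetricSpace X]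
    (hX : EOpen X) :
    (∀ x : X, IsOpen (pathComponent x)) ∧ LocPathConnectedSpace X := by
  have : LocallyPathConnectedSpace X :=
    locallyPathConnectedSpace_iff_pathComponentIn_mem_nhds.mpr fun _ _ hu hxu =>
      hX.eventually_joinedIn (hu.mem_nhds hxu)
  exact ⟨IsOpen.pathComponent, this⟩

/-- If `X` is e-open then its path components are open; in particular `X` is locally
path-connected. -/
theorem eOpen_pathComponents_open {X : Type*} [MetricSpace X] [CompactSpace X]
    (hX : EOpen X) :
    (∀ x : X, IsOpen (pathComponent x)) ∧ LocPathConnectedSpace X :=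
  eOpen_pathComponents_open_general hX
end

section
/- A compact metrizable space X is an absolute neighborhood retract if and only if: whenever Y is a compact metrizable space, (Zₙ) a decreasing sequence of closed subspaces of Y with intersection Z, and φ : Z → X a continuous map, then φ extends to a continuous map Zₙ → X for all sufficiently large n. -/
open Set Filter

/-- `X` is an ANR: every map into `X` from a closed subspace of a compact metrizable space
extends to an open neighborhood (the local Tietze extension property). -/
def IsANR (X : Type*) [TopologicalSpace X] : Prop :=
  ∀ (Y : Type) [MetricSpace Y] [CompactSpace Y] (Z : Set Y), IsClosed Z →
    ∀ φ : C(Z, X), ∃ U : Set Y, IsOpen U ∧ Z ⊆ U ∧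
      ∃ g : C(U, X), ∀ (y : Y) (hz : y ∈ Z) (hu : y ∈ U), g ⟨y, hu⟩ = φ ⟨y, hz⟩

/-- `X` is an ANR iff whenever `(Zₙ)` is a decreasing sequence of closed subspaces of a compact
metrizable space `Y` with intersection `Z`, every map `Z → X` extends to `Zₙ` for all
sufficiently large `n`. -/
theorem isANR_iff_decreasing_extension {X : Type*} [MetricSpace X] [CompactSpace X] :
    IsANR X ↔
      ∀ (Y : Type) [MetricSpace Y] [CompactSpace Y] (Zseq : ℕ → Set Y),
        (∀ n, IsClosed (Zseq n)) → Antitone Zseq →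
        ∀ φ : C((⋂ n, Zseq n : Set Y), X),
          ∃ N, ∀ n ≥ N, ∃ g : C(Zseq n, X),
            ∀ (y : Y) (hz : y ∈ ⋂ n, Zseq n) (hn : y ∈ Zseq n),
              g ⟨y, hn⟩ = φ ⟨y, hz⟩ := by
  constructor
  · -- ANR ⇒ decreasing extension property
    intro hANR Y _ _ Zseq hcl hanti φ
    have hZcl : IsClosed (⋂ n, Zseq n) := isClosed_iInter hcl
    obtain ⟨U, hUopen, hZU, g, hg⟩ := hANR Y (⋂ n, Zseq n) hZcl φ
    -- Find N with Zseq N ⊆ U, by compactness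
    have hKcl : ∀ n, IsClosed (Zseq n \ U) := fun n => (hcl n).sdiff hUopen
    have hKcompact : ∀ n, IsCompact (Zseq n \ U) := fun n => (hKcl n).isCompact
    have hKanti : ∀ n, Zseq (n + 1) \ U ⊆ Zseq n \ U :=
      fun n => diff_subset_diff_left (hanti (Nat.le_succ n))
    have hKempty : (⋂ n, Zseq n \ U) = ∅ := by
      ext y
      simp only [mem_iInter, mem_diff, mem_empty_iff_false, iff_false, not_forall]
      by_contra hc
      push_neg at hc
      exact (hc 0).2 (hZU (mem_iInter.2 fun n => (hc n).1))
    have : ∃ N, Zseq N \ U = ∅ := by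
      by_contra h
      push_neg at h
      have := IsCompact.nonempty_iInter_of_sequence_nonempty_isCompact_isClosed
        (fun n => Zseq n \ U) hKanti h
        (hKcompact 0) hKcl
      rw [hKempty] at this
      exact this.ne_empty rfl
    obtain ⟨N, hN⟩ := this
    refine ⟨N, fun n hn => ?_⟩
    have hsub : Zseq n ⊆ U := by
      have : Zseq n \ U = ∅ := eq_empty_of_subset_empty (hN ▸ diff_subset_diff_left (hanti hn))
      exact diff_eq_empty.1 this
    refine ⟨g.comp ⟨Set.inclusion hsub, continuous_inclusion hsub⟩, fun y hz hyn => ?_⟩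
    exact hg y hz (hsub hyn)
  · -- decreasing extension property ⇒ ANR
    intro h Y _ _ Z hZcl φ
    set Zseq : ℕ → Set Y := fun n => Metric.cthickening (1 / (n + 1)) Z with hZseq
    have hcl : ∀ n, IsClosed (Zseq n) := fun n => Metric.isClosed_cthickening
    have hanti : Antitone Zseq := fun m n hmn =>
      Metric.cthickening_mono (by
        apply one_div_le_one_div_of_le
        · positivity
        · exact_mod_cast Nat.add_le_add_right hmn 1) Z
    have hIZ : (⋂ n, Zseq n) = Z := by
      have : (⋂ n, Zseq n) = ⋂ δ ∈ Set.range (fun n : ℕ => 1 / ((n : ℝ) + 1)),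
          Metric.cthickening δ Z := by
        rw [biInter_range]
      rw [this, ← Metric.closure_eq_iInter_cthickening' Z _ (fun ε hε => ?_), hZcl.closure_eq]
      obtain ⟨n, hn⟩ := exists_nat_one_div_lt hε
      exact ⟨1 / ((n : ℝ) + 1), ⟨n, rfl⟩, ⟨by positivity, hn.le⟩⟩
    have hsub : (⋂ n, Zseq n) ⊆ Z := hIZ.le
    obtain ⟨N, hN⟩ := h Y Zseq hcl hanti
      (φ.comp ⟨Set.inclusion hsub, continuous_inclusion hsub⟩)
    obtain ⟨g, hg⟩ := hN N le_rfl
    refine ⟨Metric.thickening (1 / (N + 1)) Z, Metric.isOpen_thickening,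
      Metric.self_subset_thickening (by positivity) Z, ?_⟩
    have hUZ : Metric.thickening (1 / (N + 1)) Z ⊆ Zseq N :=
      Metric.thickening_subset_cthickening _ _
    refine ⟨g.comp ⟨Set.inclusion hUZ, continuous_inclusion hUZ⟩, fun y hz hu => ?_⟩
    have hz' : y ∈ ⋂ n, Zseq n := hIZ.symm ▸ hz
    have := hg y hz' (hUZ hu)
    simpa using this
end

section
/- Every compact metrizable absolute neighborhood retract X is e-open: for every compact metrizable Y, closed Z ⊆ Y, continuous maps φₙ : Z → X converging uniformly to φ : Z → X, if φ extends to a continuous map Y → X then φₙ extends to a continuous map Y → X for all sufficiently large n. -/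
open Set Filter

/-!
Applying the ANR property to the map on `{t = 0} ∪ {x = x'} ∪ {t = 1} ⊆ X × X × I` which is
`x` except at `t = 1`, where it is `x'`, gives by compactness a map `H` defined wherever
`dist x x' < δ`, with `H (x, x', ·)` running from `x` to `x'`. For large `n`, `φₙ` extends to a
neighbourhood of `Z` by a map `k` that is `δ`-close near `Z` to an extension `g` of `φ`. With an
Urysohn function `t` equal to `1` on `Z` and supported where `k` and `g` are `δ`-close,
`y ↦ H (g y, k y, t y)` extends `φₙ` to all of `Y`.
-/

theorem ContinuousMap.continuousOn_extend_val {X Y : Type*} [TopologicalSpace X]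
    [TopologicalSpace Y] {U : Set Y} (k : C(U, X)) (g : Y → X) :
    ContinuousOn (Function.extend Subtype.val k g) U := by
  rw [continuousOn_iff_continuous_domRestrict]
  convert k.continuous using 1
  funext y
  exact Subtype.val_injective.extend_apply k g y

theorem IsANR.exists_continuousOn_extension {X : Type*} [TopologicalSpace X] (hX : IsANR X)
    {Y : Type} [MetricSpace Y] [CompactSpace Y] {Z : Set Y} (hZ : IsClosed Z) {f : Y → X}
    (hf : ContinuousOn f Z) :
    ∃ U, IsOpen U ∧ Z ⊆ U ∧ ∃ F : Y → X, ContinuousOn F U ∧ EqOn F f Z := by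
  obtain ⟨U, hU, hZU, G, hG⟩ := hX Y Z hZ ⟨Z.domRestrict f, hf.domRestrict⟩
  refine ⟨U, hU, hZU, _, G.continuousOn_extend_val f, fun z hz => ?_⟩
  rw [Subtype.val_injective.extend_apply G f ⟨z, hZU hz⟩, hG z hz]
  rfl

theorem continuousOn_ite_eq_one {X : Type*} [TopologicalSpace X] [T2Space X] :
    ContinuousOn (fun p : X × X × unitInterval => if p.2.2 = 1 then p.2.1 else p.1)
      {p | p.2.2 = 0 ∨ p.1 = p.2.1 ∨ p.2.2 = 1} := by
  set ψ := fun p : X × X × unitInterval => if p.2.2 = 1 then p.2.1 else p.1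
  have hstart : ContinuousOn ψ {p | p.2.2 = 0} :=
    continuous_fst.continuousOn.congr fun p (hp : p.2.2 = 0) => by simp [ψ, hp]
  have hdiag : ContinuousOn ψ {p | p.1 = p.2.1} :=
    continuous_fst.continuousOn.congr fun p (hp : p.1 = p.2.1) => by simp [ψ, hp]
  have hend : ContinuousOn ψ {p | p.2.2 = 1} :=
    continuous_snd.fst.continuousOn.congr fun p (hp : p.2.2 = 1) => by simp [ψ, hp]
  have hclosed₀ : IsClosed {p : X × X × unitInterval | p.2.2 = 0} :=
    isClosed_eq continuous_snd.snd continuous_const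
  have hclosedΔ : IsClosed {p : X × X × unitInterval | p.1 = p.2.1} :=
    isClosed_eq continuous_fst continuous_snd.fst
  have hclosed₁ : IsClosed {p : X × X × unitInterval | p.2.2 = 1} :=
    isClosed_eq continuous_snd.snd continuous_const
  exact hstart.union_of_isClosed (hdiag.union_of_isClosed hend hclosedΔ hclosed₁) hclosed₀
    (hclosedΔ.union hclosed₁)

theorem exists_pos_setOf_dist_lt_subset {X T : Type*} [MetricSpace X] [CompactSpace X]
    [MetricSpace T] [CompactSpace T] {W : Set (X × X × T)} (hW : IsOpen W)
    (hdiag : ∀ x t, (x, x, t) ∈ W) : ∃ δ > 0, {p | dist p.1 p.2.1 < δ} ⊆ W := by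
  have hcompact : IsCompact {p : X × X × T | p.1 = p.2.1} :=
    (isClosed_eq continuous_fst continuous_snd.fst).isCompact
  obtain ⟨δ, hδ, hδW⟩ := hcompact.exists_thickening_subset_open hW
    (by rintro ⟨x, x', t⟩ (rfl : x = x'); exact hdiag x t)
  refine ⟨δ, hδ, fun p (hp : dist p.1 p.2.1 < δ) => hδW ?_⟩
  rw [Metric.mem_thickening_iff]
  exact ⟨(p.1, p.1, p.2.2), rfl, by simpa [Prod.dist_eq, dist_comm] using hp⟩

theorem IsANR.exists_local_equiconnection {X : Type} [MetricSpace X] [CompactSpace X]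
    (hX : IsANR X) : ∃ δ > 0, ∃ H : X × X × unitInterval → X,
      ContinuousOn H {p | dist p.1 p.2.1 < δ} ∧ (∀ x x', H (x, x', 0) = x) ∧
        ∀ x x', H (x, x', 1) = x' := by
  obtain ⟨W, hW, hsubW, H, hH, hHeq⟩ := hX.exists_continuousOn_extension
    ((isClosed_eq continuous_snd.snd continuous_const).union
      ((isClosed_eq continuous_fst continuous_snd.fst).union
        (isClosed_eq continuous_snd.snd continuous_const))) continuousOn_ite_eq_one
  obtain ⟨δ, hδ, hδW⟩ :=
    exists_pos_setOf_dist_lt_subset hW fun x t => hsubW (Or.inr (Or.inl rfl))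
  refine ⟨δ, hδ, H, hH.mono hδW, fun x x' => ?_, fun x x' => ?_⟩
  · exact (hHeq (Or.inl rfl)).trans (by simp)
  · exact (hHeq (Or.inr (Or.inr rfl))).trans (by simp)

theorem exists_continuous_eqOn_of_dist_lt {X Y : Type*} [MetricSpace X] [TopologicalSpace Y]
    [CompactSpace Y] [R1Space Y] {δ : ℝ} {H : X × X × unitInterval → X}
    (hH : ContinuousOn H {p | dist p.1 p.2.1 < δ}) (hH₀ : ∀ x x', H (x, x', 0) = x)
    (hH₁ : ∀ x x', H (x, x', 1) = x') {Z U : Set Y} (hZ : IsClosed Z) (hU : IsOpen U)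
    (hZU : Z ⊆ U) {k g : Y → X} (hk : ContinuousOn k U) (hg : Continuous g)
    (hkg : ∀ z ∈ Z, dist (g z) (k z) < δ) : ∃ F : C(Y, X), EqOn F k Z := by
  set O := U ∩ (fun y => dist (g y) (k y)) ⁻¹' Iio δ
  have hO : IsOpen O :=
    (continuous_dist.comp_continuousOn (hg.continuousOn.prodMk hk)).isOpen_inter_preimage hU
      isOpen_Iio
  obtain ⟨u, hsupp, hu₁, hu_mem⟩ := exists_tsupport_one_of_isOpen_isClosed hO
    isClosed_closure.isCompact hZ fun z hz => ⟨hZU hz, hkg z hz⟩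
  let t : C(Y, unitInterval) := ⟨fun y => ⟨u y, hu_mem y⟩, by fun_prop⟩
  let F y := H (g y, k y, t y)
  have hFO : ContinuousOn F O :=
    hH.comp (hg.continuousOn.prodMk ((hk.mono inter_subset_left).prodMk t.continuous.continuousOn))
      fun y hy => hy.2
  have hFg : ContinuousOn F (tsupport u)ᶜ := hg.continuousOn.congr fun y hy => by
    have : t y = 0 := Subtype.ext (image_eq_zero_of_notMem_tsupport (f := u) hy)
    simp [F, this, hH₀]
  have hcover : O ∪ (tsupport u)ᶜ = univ :=
    eq_univ_of_forall fun y => (em (y ∈ tsupport u)).imp (fun h => hsupp h) id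
  refine ⟨⟨F, continuousOn_univ.1 ?_⟩, fun z hz => ?_⟩
  · rw [← hcover]
    exact hFO.union_of_isOpen hFg hO (isClosed_tsupport u).isOpen_compl
  · have : t z = 1 := Subtype.ext (hu₁ hz)
    simp [F, this, hH₁]

/-- Every compact metrizable ANR is e-open: if extendible `φ` is the uniform limit of maps
`φₙ`, and `φ` extends to `Y`, then `φₙ` extends to `Y` for all sufficiently large `n`. -/
theorem isANR_eOpen {X : Type} [MetricSpace X] [CompactSpace X] (hX : IsANR X)
    {Y : Type} [MetricSpace Y] [CompactSpace Y] (Z : Set Y) (hZ : IsClosed Z)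
    (φ : ℕ → C(Z, X)) (φl : C(Z, X))
    (hconv : TendstoUniformly (fun n => ⇑(φ n)) (⇑φl) atTop)
    (hext : ExtendsTo Z φl) :
    ∀ᶠ n in atTop, ExtendsTo Z (φ n) := by
  obtain ⟨δ, hδ, H, hH, hH₀, hH₁⟩ := hX.exists_local_equiconnection
  obtain ⟨g, hg⟩ := hext
  filter_upwards [Metric.tendstoUniformly_iff.1 hconv δ hδ] with n hn
  obtain ⟨U, hU, hZU, k, hk, hkφ⟩ :=
    hX.exists_continuousOn_extension hZ ((φ n).continuousOn_extend_val g)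
  have hφ : ∀ z : Z, k z = φ n z := fun z =>
    (hkφ z.2).trans (Subtype.val_injective.extend_apply _ _ z)
  obtain ⟨F, hF⟩ := exists_continuous_eqOn_of_dist_lt hH hH₀ hH₁ hZ hU hZU hk g.continuous
    fun z hz => by simpa only [hg ⟨z, hz⟩, hφ ⟨z, hz⟩] using hn ⟨z, hz⟩
  exact ⟨F, fun z => (hF z.2).trans (hφ z)⟩
end

section
/- Let X be an e-open compact metrizable space, Y compact metrizable, and φₙ, φ ∈ C(Y, X) with φₙ → φ uniformly on Y. Then φₙ is homotopic to φ for all sufficiently large n; in fact, there exist n and a continuous path ψ : [0, 1/n] → C(Y, X) with ψ(1/k) = φₖ for all k ≥ n and ψ(0) = φ. -/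
open Set Filter

/-! A convergent sequence together with its limit is a continuous map out of the one-point
compactification `ℕ ∪ {∞}`, which embeds in `[0, 1]` as `{1 / k} ∪ {0}`. The tails
`(1 / k, y) ↦ φ_{max k n} y`, `(0, y) ↦ φ y` form continuous maps on the closed set
`({1 / k} ∪ {0}) × Y ⊆ [0, 1] × Y` converging, as `n → ∞`, to `(t, y) ↦ φ y`, which extends to
`[0, 1] × Y`. By e-openness some tail extends to `[0, 1] × Y` as well, and that extension, read as a
path in `C(Y, X)`, passes through `φ_k` at `1 / k` for `k ≥ n` and through `φ` at `0`. -/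

open Topology OnePoint unitInterval

theorem EOpen.isOpen_setOf_exists_comp_eq {X : Type} [TopologicalSpace X] (hX : EOpen X)
    {Y Z : Type} [MetricSpace Y] [CompactSpace Y] [TopologicalSpace Z] {i : C(Z, Y)}
    (hi : IsClosedEmbedding i) :
    IsOpen {f : C(Z, X) | ∃ g : C(Y, X), g.comp i = f} := by
  let e : Z ≃ₜ range i := hi.isEmbedding.toHomeomorph
  have he (z : Z) : (e z : Y) = i z := rfl
  have hpre : {f : C(Z, X) | ∃ g : C(Y, X), g.comp i = f} =
      ContinuousMap.compRightContinuousMap X (e.symm : C(range i, Z)) ⁻¹'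
        {f | ExtendsTo (range i) f} := by
    ext f
    refine exists_congr fun g => ⟨?_, ?_⟩
    · rintro rfl z
      simp [← he]
    · intro h
      ext z
      simpa [he] using h (e z)
  rw [hpre]
  exact (hX Y _ hi.isClosed_range).preimage (ContinuousMap.continuous_precomp _)

theorem ContinuousMap.Homotopic.of_joined {Y X : Type*} [TopologicalSpace Y]
    [LocallyCompactSpace Y] [TopologicalSpace X] {f g : C(Y, X)} (h : Joined f g) :
    f.Homotopic g :=
  let γ := h.somePath
  ⟨{ toContinuousMap := ContinuousMap.uncurry γ.toContinuousMap
     map_zero_left y := by simp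
     map_one_left y := by simp }⟩

namespace OnePoint

noncomputable def invSucc : C(OnePoint ℕ, I) :=
  continuousMapMkNat (fun k => ⟨((k : ℝ) + 1)⁻¹, by positivity, inv_le_one_of_one_le₀ (by simp)⟩)
    0 (tendsto_subtype_rng.mpr (by simpa using tendsto_one_div_add_atTop_nhds_zero_nat (𝕜 := ℝ)))

@[simp] theorem invSucc_infty : invSucc ∞ = 0 := rfl

@[simp] theorem coe_invSucc_coe (k : ℕ) : (invSucc k : ℝ) = ((k : ℝ) + 1)⁻¹ := rfl

theorem invSucc_injective : Function.Injective invSucc := by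
  intro a b hab
  induction a using OnePoint.rec <;> induction b using OnePoint.rec <;>
    simp [Subtype.ext_iff, eq_comm (a := (0 : ℝ)), Nat.cast_add_one_ne_zero] at hab ⊢
  exact hab

theorem isClosedEmbedding_invSucc : IsClosedEmbedding invSucc :=
  invSucc.continuous.isClosedEmbedding invSucc_injective

variable {E : Type*} [TopologicalSpace E] {u : ℕ → E} {l : E}

noncomputable def tailMap (hu : Tendsto u atTop (𝓝 l)) (n : ℕ) : C(OnePoint ℕ, E) :=
  continuousMapMkNat (fun k => u (max (k + 1) n)) l
    (hu.comp (tendsto_atTop_mono (fun k => (Nat.le_succ k).trans (le_max_left _ _)) tendsto_id))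

@[simp] theorem tailMap_infty (hu : Tendsto u atTop (𝓝 l)) (n : ℕ) : tailMap hu n ∞ = l := rfl

@[simp] theorem tailMap_coe (hu : Tendsto u atTop (𝓝 l)) (n k : ℕ) :
    tailMap hu n k = u (max (k + 1) n) := rfl

theorem tendsto_tailMap (hu : Tendsto u atTop (𝓝 l)) :
    Tendsto (tailMap hu) atTop (𝓝 (ContinuousMap.const _ l)) := by
  rw [ContinuousMap.tendsto_nhds_compactOpen]
  intro K _ U hU hKU
  by_cases hl : l ∈ U
  · obtain ⟨N, hN⟩ := eventually_atTop.1 (hu (hU.mem_nhds hl))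
    filter_upwards [eventually_ge_atTop N] with n hn k _
    induction k using OnePoint.rec
    · exact hl
    · exact hN _ (hn.trans (le_max_right _ _))
  · exact .of_forall fun _ k hk => absurd (hKU hk) hl

end OnePoint

theorem EOpen.exists_path_through_tail {X : Type} [TopologicalSpace X] (hX : EOpen X)
    {Y : Type} [MetricSpace Y] [CompactSpace Y] {φ : ℕ → C(Y, X)} {φl : C(Y, X)}
    (hφ : Tendsto φ atTop (𝓝 φl)) :
    ∃ n : ℕ, 0 < n ∧ ∃ H : C(ℝ, C(Y, X)), (∀ k, n ≤ k → H (k : ℝ)⁻¹ = φ k) ∧ H 0 = φl := by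
  let i : C(OnePoint ℕ × Y, I × Y) := invSucc.prodMap (ContinuousMap.id Y)
  have hi : IsClosedEmbedding i := isClosedEmbedding_invSucc.prodMap .id
  have hlim : (ContinuousMap.const _ φl).uncurry ∈ {f | ∃ g : C(I × Y, X), g.comp i = f} :=
    ⟨φl.comp ContinuousMap.snd, rfl⟩
  have hext : ∀ᶠ n in atTop, ∃ g : C(I × Y, X), g.comp i = (tailMap hφ n).uncurry :=
    (ContinuousMap.continuous_uncurry.tendsto _).comp (tendsto_tailMap hφ)
      ((hX.isOpen_setOf_exists_comp_eq hi).mem_nhds hlim)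
  obtain ⟨n, ⟨g, hg⟩, hn⟩ := (hext.and (eventually_gt_atTop 0)).exists
  refine ⟨n, hn, (g.comp (ContinuousMap.prodMap ⟨projIcc 0 1 zero_le_one, continuous_projIcc⟩
    (ContinuousMap.id Y))).curry, ?_, ?_⟩
  · intro k hk
    obtain ⟨j, rfl⟩ : ∃ j, k = j + 1 := ⟨k - 1, by omega⟩
    have hproj : projIcc (0 : ℝ) 1 zero_le_one ((j : ℝ) + 1)⁻¹ = invSucc j :=
      projIcc_val zero_le_one (invSucc j)
    ext y
    simpa [i, hproj, max_eq_left hk] using congr($hg (j, y))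
  · ext y
    simpa [i] using congr($hg (∞, y))

theorem eOpen_homotopy_general {X : Type} [MetricSpace X] (hX : EOpen X)
    {Y : Type} [MetricSpace Y] [CompactSpace Y]
    (φ : ℕ → C(Y, X)) (φl : C(Y, X))
    (hconv : TendstoUniformly (fun n => ⇑(φ n)) (⇑φl) atTop) :
    (∀ᶠ n in atTop, (φ n).Homotopic φl) ∧
    ∃ n : ℕ, 0 < n ∧ ∃ ψ : C(Icc (0 : ℝ) ((n : ℝ)⁻¹), C(Y, X)),
      (∀ (k : ℕ) (hk : n ≤ k) (h : ((k : ℝ)⁻¹) ∈ Icc (0 : ℝ) ((n : ℝ)⁻¹)),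
        ψ ⟨(k : ℝ)⁻¹, h⟩ = φ k) ∧
      ∀ h0 : (0 : ℝ) ∈ Icc (0 : ℝ) ((n : ℝ)⁻¹), ψ ⟨0, h0⟩ = φl := by
  obtain ⟨n, hn, H, hH, hH0⟩ :=
    hX.exists_path_through_tail (ContinuousMap.tendsto_iff_tendstoUniformly.mpr hconv)
  refine ⟨?_, n, hn, H.restrict _, fun k hk _ => hH k hk, fun _ => hH0⟩
  filter_upwards [eventually_ge_atTop n] with k hk
  rw [← hH k hk, ← hH0]
  exact .of_joined ((PathConnectedSpace.joined _ _).map H.continuous)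

/-- If `X` is e-open and `φₙ → φ` uniformly on `Y`, then `φₙ` is homotopic to `φ` for all
sufficiently large `n`; in fact there is a continuous path `ψ : [0, 1/n] → C(Y, X)` with
`ψ(1/k) = φₖ` for `k ≥ n` and `ψ(0) = φ`. -/
theorem eOpen_homotopy {X : Type} [MetricSpace X] [CompactSpace X] (hX : EOpen X)
    {Y : Type} [MetricSpace Y] [CompactSpace Y]
    (φ : ℕ → C(Y, X)) (φl : C(Y, X))
    (hconv : TendstoUniformly (fun n => ⇑(φ n)) (⇑φl) atTop) :
    (∀ᶠ n in atTop, (φ n).Homotopic φl) ∧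
    ∃ n : ℕ, 0 < n ∧ ∃ ψ : C(Icc (0 : ℝ) ((n : ℝ)⁻¹), C(Y, X)),
      (∀ (k : ℕ) (hk : n ≤ k) (h : ((k : ℝ)⁻¹) ∈ Icc (0 : ℝ) ((n : ℝ)⁻¹)),
        ψ ⟨(k : ℝ)⁻¹, h⟩ = φ k) ∧
      ∀ h0 : (0 : ℝ) ∈ Icc (0 : ℝ) ((n : ℝ)⁻¹), ψ ⟨0, h0⟩ = φl :=
  eOpen_homotopy_general hX φ φl hconv
end

section
/- Every compact metrizable ANR is e-closed: if X is an ANR, Y compact metrizable, Z ⊆ Y closed, and (φₙ) a sequence of continuous maps Z → X each extending continuously to Y and converging uniformly to a continuous map φ : Z → X, then φ extends continuously to Y. -/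
open Set Filter

/-!
Embed `X` in the Hilbert cube `Q = [0,1]^ℕ` with `1`-Lipschitz coordinates. Since `X` is an ANR,
the inverse of the embedding extends to a retraction `r` defined on a `δ`-neighbourhood of `X`
in `Q`. Take `n` with `φₙ` uniformly close to `φ` and let `gₙ` extend `φₙ`. Correcting `gₙ`
coordinatewise by bounded Tietze extensions of the small differences `φ - φₙ` gives a map
`F : Y → Q` that equals `φ` on `Z` and stays within `δ` of `X`; then `r ∘ F` extends `φ`.
The convexity of `Q` thus replaces the homotopy extension argument.
-/

open unitInterval Topology

lemma IsANR.exists_neighborhood_retraction {X : Type*} [TopologicalSpace X]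
    (hX : IsANR X) {Q : Type} [MetricSpace Q] [CompactSpace Q] {e : X → Q}
    (he : IsClosedEmbedding e) :
    ∃ U : Set Q, IsOpen U ∧ range e ⊆ U ∧ ∃ r : C(U, X), ∀ x (hx : e x ∈ U), r ⟨e x, hx⟩ = x := by
  let eInv : C(range e, X) := ⟨he.isEmbedding.toHomeomorph.symm, by fun_prop⟩
  obtain ⟨U, hU, heU, r, hr⟩ := hX Q (range e) he.isClosed_range eInv
  exact ⟨U, hU, heU, r, fun x hx => (hr (e x) ⟨x, rfl⟩ hx).trans
    (he.isEmbedding.toHomeomorph.symm_apply_eq.mpr rfl)⟩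

lemma exists_injective_toPiUnitInterval_lipschitzWith (X : Type*) [MetricSpace X]
    [TopologicalSpace.SeparableSpace X] [Nonempty X] :
    ∃ e : X → ℕ → I, Function.Injective e ∧ ∀ i, LipschitzWith 1 fun x => e x i := by
  let xs := TopologicalSpace.denseSeq X
  let e : X → ℕ → I := fun x i => projIcc 0 1 zero_le_one (dist x (xs i))
  have hlip : ∀ i, LipschitzWith 1 fun x => e x i := fun i =>
    mul_one (1 : NNReal) ▸ (LipschitzWith.projIcc zero_le_one).comp (LipschitzWith.dist_left (xs i))
  refine ⟨e, fun x y hxy => ?_, hlip⟩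
  have hxy' : (fun p => projIcc (0 : ℝ) 1 zero_le_one (dist x p)) =
      fun p => projIcc (0 : ℝ) 1 zero_le_one (dist y p) :=
    (TopologicalSpace.denseRange_denseSeq X).equalizer (by fun_prop) (by fun_prop)
      (funext fun i => congrFun hxy i)
  have hyx : projIcc (0 : ℝ) 1 zero_le_one (dist y x) = ⟨0, left_mem_Icc.2 zero_le_one⟩ := by
    rw [← congrFun hxy' x, dist_self, projIcc_left]
  exact (dist_le_zero.mp ((projIcc_eq_left zero_lt_one).mp hyx)).symm

lemma exists_extension_forall_dist_apply_lt {Y ι : Type*} [TopologicalSpace Y] [NormalSpace Y]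
    {Z : Set Y} (hZ : IsClosed Z) (g : C(Y, ι → I)) (f : C(Z, ι → I)) {ε : ℝ} (hε : 0 < ε)
    (hfg : ∀ (z : Z) i, dist (f z i) (g z i) < ε) :
    ∃ F : C(Y, ι → I), (∀ z : Z, F z = f z) ∧ ∀ y i, dist (F y i) (g y i) < ε := by
  have hv : ∀ i, ∃ v : C(Y, ℝ), (∀ y, v y ∈ Ioo (-ε) ε) ∧
      v.restrict Z = ⟨fun z => (f z i : ℝ) - g z i, by fun_prop⟩ := fun i =>
    ContinuousMap.exists_restrict_eq_forall_mem_of_closed _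
      (fun z => abs_lt.mp (hfg z i)) ⟨0, neg_lt_zero.mpr hε, hε⟩ hZ
  choose v hv hvZ using hv
  refine ⟨⟨fun y i => projIcc 0 1 zero_le_one (g y i + v i y), by fun_prop⟩,
    fun z => funext fun i => ?_, fun y i => ?_⟩
  · have hvz := DFunLike.congr_fun (hvZ i) z
    simp only [ContinuousMap.restrict_apply, ContinuousMap.coe_mk] at hvz
    simp [hvz]
  · calc dist (projIcc 0 1 zero_le_one (g y i + v i y)) (g y i)
        = dist (projIcc 0 1 zero_le_one (g y i + v i y)) (projIcc 0 1 zero_le_one (g y i)) := by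
          rw [projIcc_val]
      _ ≤ dist (g y i + v i y : ℝ) (g y i) := by
          simpa using (LipschitzWith.projIcc zero_le_one).dist_le_mul (g y i + v i y : ℝ) (g y i)
      _ < ε := by
          rw [Real.dist_eq, add_sub_cancel_left]
          exact abs_lt.mpr (hv i y)

section HilbertCube

attribute [local instance] PiCountable.metricSpace

lemma PiCountable.exists_pos_dist_lt_of_forall_dist_apply_lt {ι β : Type*} [Encodable ι]
    [MetricSpace β] {δ : ℝ} (hδ : 0 < δ) :
    ∃ ε > 0, ∀ x y : ι → β, (∀ i, dist (x i) (y i) < ε) → dist x y < δ := by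
  have h := UniformFun.uniformContinuous_toFun (α := ι) (β := β) (Metric.dist_mem_uniformity hδ)
  obtain ⟨ε, hε, hsub⟩ :=
    (UniformFun.hasBasis_uniformity_of_basis ι β Metric.uniformity_basis_dist).mem_iff.mp h
  exact ⟨ε, hε, fun x y hxy => @hsub (UniformFun.ofFun x, UniformFun.ofFun y) hxy⟩

theorem isANR_eClosed_general {X : Type} [MetricSpace X] [CompactSpace X] (hX : IsANR X)
    {Y : Type} [MetricSpace Y] (Z : Set Y) (hZ : IsClosed Z)
    (φ : ℕ → C(Z, X)) (φl : C(Z, X))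
    (hconv : TendstoUniformly (fun n => ⇑(φ n)) (⇑φl) atTop)
    (hext : ∀ n, ExtendsTo Z (φ n)) :
    ExtendsTo Z φl := by
  rcases isEmpty_or_nonempty Y with _ | ⟨⟨y₀⟩⟩
  · exact ⟨⟨isEmptyElim, continuous_of_const isEmptyElim⟩, fun z => isEmptyElim z.1⟩
  obtain ⟨g₀, -⟩ := hext 0
  have : Nonempty X := ⟨g₀ y₀⟩
  obtain ⟨e, he_inj, he_lip⟩ := exists_injective_toPiUnitInterval_lipschitzWith X
  have he : Continuous e := continuous_pi fun i => (he_lip i).continuous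
  obtain ⟨U, hU, heU, r, hr⟩ :=
    hX.exists_neighborhood_retraction (he.isClosedEmbedding he_inj)
  obtain ⟨δ, hδ, hδU⟩ := (isCompact_range he).exists_thickening_subset_open hU heU
  obtain ⟨ε, hε, hεδ⟩ := PiCountable.exists_pos_dist_lt_of_forall_dist_apply_lt (ι := ℕ) (β := I) hδ
  obtain ⟨n, hn⟩ := ((Metric.tendstoUniformly_iff.mp hconv) ε hε).exists
  obtain ⟨gₙ, hgₙ⟩ := hext n
  let eC : C(X, ℕ → I) := ⟨e, he⟩
  obtain ⟨F, hFZ, hFg⟩ := exists_extension_forall_dist_apply_lt hZ (eC.comp gₙ) (eC.comp φl) hε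
    fun z i => by
      have h := (he_lip i).dist_le_mul (φl z) (φ n z)
      simp only [NNReal.coe_one, one_mul] at h
      simpa [eC, hgₙ] using h.trans_lt (hn z)
  have hFU : ∀ y, F y ∈ U := fun y => hδU (Metric.mem_thickening_iff.mpr
    ⟨e (gₙ y), mem_range_self _, hεδ _ _ (hFg y)⟩)
  refine ⟨r.comp ⟨fun y => ⟨F y, hFU y⟩, by fun_prop⟩, fun z => ?_⟩
  simp [hFZ, eC, hr]

/-- Every compact metrizable ANR is e-closed: a uniform limit of extendible maps into an ANR
is extendible. -/
theorem isANR_eClosed {X : Type} [MetricSpace X] [CompactSpace X] (hX : IsANR X)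
    {Y : Type} [MetricSpace Y] [CompactSpace Y] (Z : Set Y) (hZ : IsClosed Z)
    (φ : ℕ → C(Z, X)) (φl : C(Z, X))
    (hconv : TendstoUniformly (fun n => ⇑(φ n)) (⇑φl) atTop)
    (hext : ∀ n, ExtendsTo Z (φ n)) :
    ExtendsTo Z φl :=
  isANR_eClosed_general hX Z hZ φ φl hconv hext

end HilbertCube
end

section
/- Let X be an e-open compact metrizable space and p ∈ X. For every neighborhood U of p there is a neighborhood V of p such that whenever Y is compact metrizable, Z ⊆ Y is closed, and φ : Z → V is continuous, then φ extends to a continuous map φ̄ : Y → U. -/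
open Set Filter Topology

section AuxLemmas

private lemma auxGap {k m : ℕ} (h : k ≠ m) :
    ((1:ℝ)/2)^(m+1) ≤ |((1:ℝ)/2)^k - (1/2)^m| := by
  have h2 : (0:ℝ) ≤ 1/2 := by norm_num
  have h3 : (1:ℝ)/2 ≤ 1 := by norm_num
  rcases h.lt_or_gt with hlt | hlt
  · have e1 : ((1:ℝ)/2)^m ≤ (1/2)^(k+1) := pow_le_pow_of_le_one h2 h3 hlt
    have e3 : ((1:ℝ)/2)^(m+1) ≤ (1/2)^(k+1) := pow_le_pow_of_le_one h2 h3 (by omega)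
    have e2 : ((1:ℝ)/2)^(k+1) = (1/2)^k * (1/2) := pow_succ _ _
    have e4 : (0:ℝ) ≤ (1/2)^k := pow_nonneg h2 k
    rw [abs_of_nonneg (by linarith)]
    linarith
  · have e1 : ((1:ℝ)/2)^k ≤ (1/2)^(m+1) := pow_le_pow_of_le_one h2 h3 hlt
    have e2 : ((1:ℝ)/2)^(m+1) = (1/2)^m * (1/2) := pow_succ _ _
    have e4 : (0:ℝ) ≤ (1/2)^m := pow_nonneg h2 m
    rw [abs_sub_comm, abs_of_nonneg (by linarith)]
    linarith

private lemma auxCompact {A : Type*} [MetricSpace A] (z₀ : A) (K : ℕ → Set A)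
    (hK : ∀ n, IsCompact (K n)) (hd : ∀ n, ∀ x ∈ K n, dist x z₀ ≤ (1/2)^n) :
    IsCompact (insert z₀ (⋃ n, K n)) := by
  classical
  apply isCompact_of_finite_subcover
  intro ι Uo hUo hcov
  obtain ⟨i₀, hi₀⟩ := mem_iUnion.mp (hcov (mem_insert _ _))
  obtain ⟨ε, εpos, hball⟩ := Metric.isOpen_iff.mp (hUo i₀) z₀ hi₀
  obtain ⟨N, hN⟩ := exists_pow_lt_of_lt_one εpos (by norm_num : (1:ℝ)/2 < 1)
  have htail : ∀ n, N ≤ n → K n ⊆ Uo i₀ := by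
    intro n hn x hx
    apply hball
    rw [Metric.mem_ball]
    calc dist x z₀ ≤ (1/2)^n := hd n x hx
      _ ≤ (1/2)^N := pow_le_pow_of_le_one (by norm_num) (by norm_num) hn
      _ < ε := hN
  have hcomp : IsCompact (⋃ n ∈ {i : ℕ | i < N}, K n) :=
    (Set.finite_lt_nat N).isCompact_biUnion (fun n _ => hK n)
  obtain ⟨t, ht⟩ := hcomp.elim_finite_subcover Uo hUo
    (fun x hx => hcov (mem_insert_of_mem _ (by
      obtain ⟨n, -, hn⟩ := mem_iUnion₂.mp hx
      exact mem_iUnion.mpr ⟨n, hn⟩)))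
  refine ⟨insert i₀ t, ?_⟩
  rintro x (rfl | hx)
  · exact mem_iUnion₂.mpr ⟨i₀, Finset.mem_insert_self _ _, hi₀⟩
  · obtain ⟨n, hn⟩ := mem_iUnion.mp hx
    rcases lt_or_ge n N with h | h
    · obtain ⟨i, hit, hi⟩ := mem_iUnion₂.mp (ht (mem_iUnion₂.mpr ⟨n, h, hn⟩))
      exact mem_iUnion₂.mpr ⟨i, Finset.mem_insert_of_mem hit, hi⟩
    · exact mem_iUnion₂.mpr ⟨i₀, Finset.mem_insert_self _ _, htail n h hn⟩

private noncomputable def auxE {F : ℕ → Type} (b : ∀ n, F n) (m : ℕ) (y : F m) : ℝ × (∀ n, F n) :=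
  ((1/2)^m, Function.update b m y)

private lemma aux_fst_inj {k m : ℕ} (h : ((1:ℝ)/2)^k = (1/2)^m) : k = m := by
  by_contra hne
  have h1 := auxGap hne
  rw [h, sub_self, abs_zero] at h1
  exact (pow_pos (by norm_num : (0:ℝ) < 1/2) (m+1)).not_ge h1

private lemma auxUpdate_inj {F : ℕ → Type} (b : ∀ n, F n) {m : ℕ} {y z : F m}
    (h : Function.update b m y = Function.update b m z) : y = z := by
  have h1 := congrFun h m
  simpa using h1

private lemma auxE_sigma_inj {F : ℕ → Type} (b : ∀ n, F n) {q q' : Σ m, F m}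
    (h : auxE b q.1 q.2 = auxE b q'.1 q'.2) : q = q' := by
  obtain ⟨k, y⟩ := q
  obtain ⟨m, z⟩ := q'
  have h1 : ((1:ℝ)/2)^k = (1/2)^m := congrArg Prod.fst h
  obtain rfl : k = m := aux_fst_inj h1
  obtain rfl : y = z := auxUpdate_inj b (congrArg Prod.snd h)
  rfl

open Classical in
private noncomputable def auxVal {F : ℕ → Type} {X : Type} (b : ∀ n, F n)
    (Zn : ∀ n, Set (F n)) (ψ : ∀ n, ↥(Zn n) → X) (p : X) (N : ℕ)
    (x : ℝ × (∀ n, F n)) : X :=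
  if h : ∃ q : Σ m, F m, N ≤ q.1 ∧ q.2 ∈ Zn q.1 ∧ x = auxE b q.1 q.2
  then ψ h.choose.1 ⟨h.choose.2, h.choose_spec.2.1⟩
  else p

private lemma auxVal_apply_e {F : ℕ → Type} {X : Type} (b : ∀ n, F n)
    (Zn : ∀ n, Set (F n)) (ψ : ∀ n, ↥(Zn n) → X) (p : X) {N m : ℕ}
    (hNm : N ≤ m) {z : F m} (hz : z ∈ Zn m) :
    auxVal b Zn ψ p N (auxE b m z) = ψ m ⟨z, hz⟩ := by
  have hex : ∃ q : Σ m', F m', N ≤ q.1 ∧ q.2 ∈ Zn q.1 ∧ auxE b m z = auxE b q.1 q.2 :=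
    ⟨⟨m, z⟩, hNm, hz, rfl⟩
  rw [auxVal, dif_pos hex]
  have key : ∀ (q : Σ m', F m') (h1 : q.2 ∈ Zn q.1), auxE b m z = auxE b q.1 q.2 →
      ψ q.1 ⟨q.2, h1⟩ = ψ m ⟨z, hz⟩ := by
    rintro ⟨k, y⟩ h1 heq
    have h2 := auxE_sigma_inj b (q := (⟨m, z⟩ : Σ m', F m')) (q' := (⟨k, y⟩ : Σ m', F m')) heq
    injection h2 with hh1 hh2
    subst hh1
    have hh3 := eq_of_heq hh2
    subst hh3
    rfl
  exact key hex.choose hex.choose_spec.2.1 hex.choose_spec.2.2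

private lemma auxVal_apply_e_lt {F : ℕ → Type} {X : Type} (b : ∀ n, F n)
    (Zn : ∀ n, Set (F n)) (ψ : ∀ n, ↥(Zn n) → X) (p : X) {N m : ℕ}
    (hm : m < N) (z : F m) :
    auxVal b Zn ψ p N (auxE b m z) = p := by
  rw [auxVal, dif_neg]
  rintro ⟨⟨k, y⟩, hNk, -, heq⟩
  have h2 := auxE_sigma_inj b (q := (⟨m, z⟩ : Σ m', F m')) (q' := (⟨k, y⟩ : Σ m', F m')) heq
  injection h2 with hh1 _
  have hh1' : m = k := hh1
  have hNk' : N ≤ k := hNk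
  omega

private lemma auxVal_apply_base {F : ℕ → Type} {X : Type} (b : ∀ n, F n)
    (Zn : ∀ n, Set (F n)) (ψ : ∀ n, ↥(Zn n) → X) (p : X) (N : ℕ) :
    auxVal b Zn ψ p N ((0:ℝ), b) = p := by
  rw [auxVal, dif_neg]
  rintro ⟨⟨k, y⟩, -, -, heq⟩
  have h1 : (0:ℝ) = (1/2)^k := congrArg Prod.fst heq
  exact pow_ne_zero k (by norm_num : (1:ℝ)/2 ≠ 0) h1.symm

end AuxLemmas

/-- If `X` is e-open and `p ∈ X`, then for every neighborhood `U` of `p` there is a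
neighborhood `V` of `p` such that any map of a closed subspace `Z ⊆ Y` into `V` extends to a
map of `Y` into `U`. -/
theorem eOpen_localAR {X : Type} [MetricSpace X] [CompactSpace X] (hX : EOpen X)
    (p : X) (U : Set X) (hU : U ∈ 𝓝 p) :
    ∃ V ∈ 𝓝 p, ∀ (Y : Type) [MetricSpace Y] [CompactSpace Y] (Z : Set Y), IsClosed Z →
      ∀ φ : C(Z, X), (∀ z : Z, φ z ∈ V) →
        ∃ g : C(Y, X), (∀ z : Z, g z.1 = φ z) ∧ ∀ y : Y, g y ∈ U := by
  classical
  by_contra hcon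
  have H : ∀ n : ℕ, ∃ (Y : Type) (_ : MetricSpace Y) (_ : CompactSpace Y) (Z : Set Y),
      IsClosed Z ∧ ∃ φ : C(Z, X), (∀ z : Z, φ z ∈ Metric.ball p ((1/2)^n)) ∧
        ∀ g : C(Y, X), (∀ z : Z, g z.1 = φ z) → ∃ y, g y ∉ U := by
    intro n
    by_contra hno
    push_neg at hno
    exact hcon ⟨Metric.ball p ((1/2)^n), Metric.ball_mem_nhds p (by positivity), hno⟩
  choose Yn iM iC Zn hZcl φn hφ hbad using H
  letI : ∀ n, MetricSpace (Yn n) := iM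
  letI : ∀ n, CompactSpace (Yn n) := iC
  have hne : ∀ n, Nonempty (Yn n) := by
    intro n
    by_contra hemp
    obtain ⟨y, -⟩ := hbad n (ContinuousMap.const _ p)
      (fun z => absurd (Nonempty.intro z.1) hemp)
    exact hemp ⟨y⟩
  have b : ∀ n, Yn n := fun n => (hne n).some
  letI PM : MetricSpace (∀ n, Yn n) := PiCountable.metricSpace
  haveI : CompactSpace (∀ n, Yn n) := Pi.compactSpace
  -- basic distance facts
  have hFact1 : ∀ (m : ℕ) (y : Yn m), dist (Function.update b m y) b ≤ (1/2)^m := by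
    intro m y
    have h0 : dist (Function.update b m y) b
        = ∑' i : ℕ, min ((1/2)^i : ℝ) (dist (Function.update b m y i) (b i)) := by
      rw [PiCountable.dist_eq_tsum]
      simp [Encodable.encode_nat]
    calc dist (Function.update b m y) b
        = ∑' i : ℕ, min ((1/2)^i : ℝ) (dist (Function.update b m y i) (b i)) := h0
      _ = min ((1/2)^m : ℝ) (dist (Function.update b m y m) (b m)) := by
          refine tsum_eq_single m ?_
          intro i hi
          rw [Function.update_of_ne hi, dist_self]
          exact min_eq_right (by positivity)
      _ ≤ (1/2)^m := min_le_left _ _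
  have hFact2 : ∀ (m : ℕ) (x y : ∀ n, Yn n),
      min ((1/2)^m : ℝ) (dist (x m) (y m)) ≤ dist x y := by
    intro m x y
    simpa [Encodable.encode_nat] using PiCountable.min_dist_le_dist_pi x y m
  have hfib : ∀ (m : ℕ) (y : Yn m), dist (auxE b m y) ((0:ℝ), b) ≤ (1/2)^m := by
    intro m y
    rw [Prod.dist_eq]
    apply max_le
    · have h1 : dist ((auxE b m y).1) (((0:ℝ), b).1) = (1/2)^m := by
        simp [auxE, Real.dist_eq, abs_of_nonneg (pow_nonneg (by norm_num : (0:ℝ) ≤ 1/2) m)]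
      rw [h1]
    · exact hFact1 m y
  have hfibL0 : ∀ (m : ℕ) (y : Yn m) (w : ℝ × (∀ n, Yn n)),
      dist ((1/2:ℝ)^m) w.1 ≤ dist (auxE b m y) w := by
    intro m y w
    have h1 : dist ((auxE b m y).1) w.1 ≤ dist (auxE b m y) w := by
      rw [Prod.dist_eq]; exact le_max_left _ _
    exact h1
  have hecont : ∀ m, Continuous (auxE b m) := by
    intro m
    refine Continuous.prodMk continuous_const ?_
    refine continuous_pi ?_
    intro k
    rcases eq_or_ne k m with rfl | hk
    · simp only [Function.update_self]
      exact continuous_id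
    · simp only [Function.update_of_ne hk]
      exact continuous_const
  -- the spaces
  set S : Set (ℝ × (∀ n, Yn n)) := insert ((0:ℝ), b) (⋃ m, Set.range (auxE b m))
    with hSdef
  set ZS : Set (ℝ × (∀ n, Yn n)) := insert ((0:ℝ), b) (⋃ m, auxE b m '' (Zn m))
    with hZSdef
  have hScomp : IsCompact S := by
    rw [hSdef]
    apply auxCompact
    · intro n; exact isCompact_range (hecont n)
    · rintro n x ⟨y, rfl⟩; exact hfib n y
  have hZScomp : IsCompact ZS := by
    rw [hZSdef]
    apply auxCompact
    · intro n; exact ((hZcl n).isCompact).image (hecont n)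
    · rintro n x ⟨y, hy, rfl⟩; exact hfib n y
  haveI hScs : CompactSpace ↥S := isCompact_iff_compactSpace.mp hScomp
  set Z' : Set ↥S := Subtype.val ⁻¹' ZS with hZ'def
  have hZ'cl : IsClosed Z' := (hZScomp.isClosed).preimage continuous_subtype_val
  haveI : CompactSpace ↥Z' := isCompact_iff_compactSpace.mp (hZ'cl.isCompact)
  have hopen := hX ↥S Z' hZ'cl
  have hconst : ExtendsTo Z' (ContinuousMap.const ↥Z' p) :=
    ⟨ContinuousMap.const ↥S p, fun z => rfl⟩
  obtain ⟨ε, hε, hball⟩ := Metric.isOpen_iff.mp hopen _ hconst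
  obtain ⟨N, hN⟩ := exists_pow_lt_of_lt_one hε (by norm_num : (1:ℝ)/2 < 1)
  -- continuity of the glued maps
  have hvc : ∀ Nn : ℕ, ContinuousOn (auxVal b Zn (fun n => ⇑(φn n)) p Nn) ZS := by
    intro Nn
    rw [Metric.continuousOn_iff]
    intro x hx ε' hε'
    rw [hZSdef] at hx
    rcases mem_insert_iff.mp hx with rfl | hx'
    · -- continuity at the base point
      refine ⟨ε', hε', ?_⟩
      intro w hw hdw
      rw [hZSdef] at hw
      rw [auxVal_apply_base]
      rcases mem_insert_iff.mp hw with rfl | hw'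
      · rw [auxVal_apply_base, dist_self]; exact hε'
      · obtain ⟨m, hm⟩ := mem_iUnion.mp hw'
        obtain ⟨y, hy, rfl⟩ := hm
        rcases le_or_gt Nn m with hNm | hNm
        · rw [auxVal_apply_e b Zn _ p hNm hy]
          have h1 := hφ m ⟨y, hy⟩
          rw [Metric.mem_ball] at h1
          have h2 := hfibL0 m y ((0:ℝ), b)
          rw [Real.dist_eq, sub_zero, abs_of_nonneg (by positivity)] at h2
          have h3 : dist (auxE b m y) ((0:ℝ), b) < ε' := hdw
          linarith
        · rw [auxVal_apply_e_lt b Zn _ p hNm, dist_self]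
          exact hε'
    · -- continuity at a fiber point
      obtain ⟨m, hm⟩ := mem_iUnion.mp hx'
      obtain ⟨z, hz, rfl⟩ := hm
      have hmm : ((1:ℝ)/2)^(m+1) < (1/2)^m := by
        have h0 : (0:ℝ) < (1/2)^m := by positivity
        calc ((1:ℝ)/2)^(m+1) = (1/2)^m * (1/2) := pow_succ _ _
          _ < (1/2)^m := by linarith
      have hbase_far : ¬ dist ((0:ℝ), b) (auxE b m z) < (1/2)^(m+1) := by
        intro hdw
        have h2 := hfibL0 m z ((0:ℝ), b)
        rw [Real.dist_eq, sub_zero, abs_of_nonneg (by positivity)] at h2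
        rw [dist_comm] at hdw
        linarith
      have hfiber_eq : ∀ (k : ℕ) (z' : Yn k),
          dist (auxE b k z') (auxE b m z) < (1/2)^(m+1) → k = m := by
        intro k z' hdw
        by_contra hne'
        have hg := auxGap hne'
        have hfst : dist ((1/2:ℝ)^k) ((1/2:ℝ)^m) ≤ dist (auxE b k z') (auxE b m z) :=
          hfibL0 k z' (auxE b m z)
        rw [Real.dist_eq] at hfst
        linarith
      rcases le_or_gt Nn m with hNm | hNm
      · -- the interesting case : `Nn ≤ m`
        obtain ⟨δ₂, hδ₂, hδ₂p⟩ := Metric.continuous_iff.mp (φn m).continuous ⟨z, hz⟩ ε' hε'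
        refine ⟨min ((1/2)^(m+1)) (min ((1/2)^m) δ₂), by positivity, ?_⟩
        intro w hw hdw
        rw [hZSdef] at hw
        rcases mem_insert_iff.mp hw with rfl | hw'
        · exact absurd (lt_of_lt_of_le hdw (min_le_left _ _)) hbase_far
        · obtain ⟨k, hk⟩ := mem_iUnion.mp hw'
          obtain ⟨z', hz', rfl⟩ := hk
          obtain rfl : k = m :=
            hfiber_eq k z' (lt_of_lt_of_le hdw (min_le_left _ _))
          have hsnd : min ((1/2:ℝ)^k) (dist z' z) ≤ dist (auxE b k z') (auxE b k z) := by
            have h4 := hFact2 k (Function.update b k z') (Function.update b k z)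
            simp only [Function.update_self] at h4
            have h5 : dist (Function.update b k z') (Function.update b k z)
                ≤ dist (auxE b k z') (auxE b k z) := by
              rw [Prod.dist_eq]; exact le_max_right _ _
            exact le_trans h4 h5
          have hzz : dist z' z < δ₂ := by
            have h5 : dist (auxE b k z') (auxE b k z) < min ((1/2:ℝ)^k) δ₂ :=
              lt_of_lt_of_le hdw (min_le_right _ _)
            rcases le_or_gt ((1/2:ℝ)^k) (dist z' z) with h6 | h6
            · exfalso
              rw [min_eq_left h6] at hsnd
              have h7 := lt_of_lt_of_le h5 (min_le_left _ _)
              linarith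
            · rw [min_eq_right h6.le] at hsnd
              have h7 := lt_of_lt_of_le h5 (min_le_right _ _)
              linarith
          rw [auxVal_apply_e b Zn _ p hNm hz', auxVal_apply_e b Zn _ p hNm hz]
          exact hδ₂p ⟨z', hz'⟩ (by rw [Subtype.dist_eq]; exact hzz)
      · -- the trivial case : `m < Nn`
        refine ⟨(1/2)^(m+1), by positivity, ?_⟩
        intro w hw hdw
        rw [hZSdef] at hw
        rcases mem_insert_iff.mp hw with rfl | hw'
        · exact absurd hdw hbase_far
        · obtain ⟨k, hk⟩ := mem_iUnion.mp hw'
          obtain ⟨z', hz', rfl⟩ := hk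
          obtain rfl : k = m := hfiber_eq k z' hdw
          rw [auxVal_apply_e_lt b Zn _ p hNm, auxVal_apply_e_lt b Zn _ p hNm, dist_self]
          exact hε'
  -- the approximating map `fN`
  have hNcont : Continuous fun w : ↥Z' => auxVal b Zn (fun n => ⇑(φn n)) p N (w.1.1) := by
    exact (hvc N).comp_continuous (continuous_subtype_val.comp continuous_subtype_val)
      (fun w : ↥Z' => w.2)
  set fN : C(↥Z', X) := ⟨_, hNcont⟩ with hfNdef
  have hfNdist : dist fN (ContinuousMap.const ↥Z' p) < ε := by
    rw [ContinuousMap.dist_lt_iff hε]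
    rintro ⟨⟨w, hwS⟩, hwZ⟩
    show dist (auxVal b Zn (fun n => ⇑(φn n)) p N w) p < ε
    have hwZS : w ∈ ZS := hwZ
    rw [hZSdef] at hwZS
    rcases mem_insert_iff.mp hwZS with rfl | hw
    · rw [auxVal_apply_base, dist_self]; exact hε
    · obtain ⟨m, hm⟩ := mem_iUnion.mp hw
      obtain ⟨y, hy, rfl⟩ := hm
      rcases le_or_gt N m with hNm | hNm
      · rw [auxVal_apply_e b Zn _ p hNm hy]
        have h1 := hφ m ⟨y, hy⟩
        rw [Metric.mem_ball] at h1
        have h2 : ((1:ℝ)/2)^m ≤ (1/2)^N :=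
          pow_le_pow_of_le_one (by norm_num) (by norm_num) hNm
        linarith
      · rw [auxVal_apply_e_lt b Zn _ p hNm, dist_self]
        exact hε
  obtain ⟨G, hG⟩ := hball (Metric.mem_ball.mpr hfNdist)
  -- extract the contradiction
  have hs₀S : ((0:ℝ), b) ∈ S := by rw [hSdef]; exact mem_insert _ _
  have hs₀Z : (⟨((0:ℝ), b), hs₀S⟩ : ↥S) ∈ Z' := by
    rw [hZ'def]
    refine mem_preimage.mpr ?_
    rw [hZSdef]
    exact mem_insert _ _
  have hGp : G ⟨((0:ℝ), b), hs₀S⟩ = p := by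
    have h1 := hG ⟨⟨((0:ℝ), b), hs₀S⟩, hs₀Z⟩
    have h2 : fN ⟨⟨((0:ℝ), b), hs₀S⟩, hs₀Z⟩ = p := by
      rw [hfNdef]
      show auxVal b Zn (fun n => ⇑(φn n)) p N ((0:ℝ), b) = p
      exact auxVal_apply_base b Zn (fun n => ⇑(φn n)) p N
    exact h1.trans h2
  have hUnb : (⇑G) ⁻¹' U ∈ 𝓝 (⟨((0:ℝ), b), hs₀S⟩ : ↥S) := by
    apply G.continuous.continuousAt.preimage_mem_nhds
    rw [hGp]; exact hU
  obtain ⟨δ, hδ, hballδ⟩ := Metric.mem_nhds_iff.mp hUnb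
  obtain ⟨M₀, hM₀⟩ := exists_pow_lt_of_lt_one hδ (by norm_num : (1:ℝ)/2 < 1)
  set M := max N M₀ with hMdef
  have hMN : N ≤ M := le_max_left _ _
  have hMδ : ((1:ℝ)/2)^M < δ :=
    lt_of_le_of_lt (pow_le_pow_of_le_one (by norm_num) (by norm_num) (le_max_right _ _)) hM₀
  have hmemS : ∀ y : Yn M, auxE b M y ∈ S := by
    intro y
    rw [hSdef]
    exact mem_insert_of_mem _ (mem_iUnion.mpr ⟨M, mem_range_self y⟩)
  have hgMcont : Continuous fun y : Yn M => G ⟨auxE b M y, hmemS y⟩ :=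
    G.continuous.comp ((hecont M).subtype_mk hmemS)
  have hext : ∀ z : ↥(Zn M),
      (⟨_, hgMcont⟩ : C(Yn M, X)) z.1 = φn M z := by
    rintro ⟨z, hz⟩
    show G ⟨auxE b M z, hmemS z⟩ = φn M ⟨z, hz⟩
    have hmemZ : (⟨auxE b M z, hmemS z⟩ : ↥S) ∈ Z' := by
      rw [hZ'def]
      refine mem_preimage.mpr ?_
      rw [hZSdef]
      exact mem_insert_of_mem _ (mem_iUnion.mpr ⟨M, mem_image_of_mem _ hz⟩)
    have h1 := hG ⟨⟨auxE b M z, hmemS z⟩, hmemZ⟩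
    have h2 : fN ⟨⟨auxE b M z, hmemS z⟩, hmemZ⟩ = φn M ⟨z, hz⟩ := by
      rw [hfNdef]
      show auxVal b Zn (fun n => ⇑(φn n)) p N (auxE b M z) = φn M ⟨z, hz⟩
      exact auxVal_apply_e b Zn (fun n => ⇑(φn n)) p hMN hz
    exact h1.trans h2
  obtain ⟨y, hy⟩ := hbad M ⟨_, hgMcont⟩ hext
  apply hy
  show G ⟨auxE b M y, hmemS y⟩ ∈ U
  apply hballδ
  rw [Metric.mem_ball, Subtype.dist_eq]
  exact lt_of_le_of_lt (hfib M y) hMδ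
end

section
/- Every e-open compact metrizable space X is locally contractible; in fact, for every p ∈ X and every neighborhood U of p, there is a neighborhood V of p and a homotopy H : V̄ × [0,1] → U with H(x,0) = x, H(x,1) = p for all x ∈ V̄, and H(p,t) = p for all t (i.e., V contracts to p within U relative to p). -/
open Set Filter Topology unitInterval

/-- Every e-open space is locally contractible: for each `p` and neighborhood `U` of `p` there
is a neighborhood `V` of `p` whose closure contracts to `p` within `U` relative to `p`. -/
theorem eOpen_locallyContractible {X : Type} [MetricSpace X] [CompactSpace X] (hX : EOpen X)
    (p : X) (U : Set X) (hU : U ∈ 𝓝 p) :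
    ∃ V ∈ 𝓝 p, ∃ H : C(↥(closure V) × I, X),
      (∀ x : ↥(closure V), H (x, 0) = x.1) ∧
      (∀ x : ↥(closure V), H (x, 1) = p) ∧
      (∀ (hp : p ∈ closure V) (t : I), H (⟨p, hp⟩, t) = p) ∧
      (∀ q : ↥(closure V) × I, H q ∈ U) := by
  classical
  have hf0 : Tendsto (fun k : ℕ => 1 / ((k : ℝ) + 1)) atTop (𝓝 0) :=
    tendsto_one_div_add_atTop_nhds_zero_nat
  set T : Set ℝ := insert 0 (Set.range fun k : ℕ => 1 / ((k : ℝ) + 1)) with hTdef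
  have hTcompact : IsCompact T := hf0.isCompact_insert_range
  have hTclosed : IsClosed T := hTcompact.isClosed
  have hT0 : ∀ u ∈ T, 0 ≤ u := by
    intro u hu
    rw [hTdef] at hu
    rcases hu with rfl | ⟨k, rfl⟩
    · exact le_rfl
    · positivity
  set S : Set (ℝ × X × I) := {q | q.1 ∈ T ∧ dist q.2.1 p ≤ q.1} with hSdef
  have hSclosed : IsClosed S := by
    apply IsClosed.inter (hTclosed.preimage continuous_fst)
    exact isClosed_le ((continuous_fst.comp continuous_snd).dist continuous_const) continuous_fst
  have hScompact : IsCompact S :=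
    (hTcompact.prod (isCompact_univ : IsCompact (Set.univ : Set (X × I)))).of_isClosed_subset
      hSclosed (fun q hq => Set.mem_prod.mpr ⟨hq.1, Set.mem_univ _⟩)
  haveI : CompactSpace ↥S := isCompact_iff_compactSpace.mp hScompact
  set Z : Set ↥S := {y | y.1.2.2 = (0 : I) ∨ y.1.2.2 = (1 : I) ∨ y.1.2.1 = p} with hZdef
  have htS : Continuous fun y : ↥S => y.1.2.2 :=
    (continuous_snd.comp continuous_snd).comp continuous_subtype_val
  have hxS : Continuous fun y : ↥S => y.1.2.1 :=
    (continuous_fst.comp continuous_snd).comp continuous_subtype_val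
  have hsS : Continuous fun y : ↥S => y.1.1 := continuous_fst.comp continuous_subtype_val
  have hZclosed : IsClosed Z :=
    (isClosed_eq htS continuous_const).union
      ((isClosed_eq htS continuous_const).union (isClosed_eq hxS continuous_const))
  haveI : CompactSpace ↥Z := isCompact_iff_compactSpace.mp hZclosed.isCompact
  have hE : IsOpen {f : C(↥Z, X) | ExtendsTo Z f} := hX ↥S Z hZclosed
  have hconst : ExtendsTo Z (ContinuousMap.const ↥Z p) :=
    ⟨ContinuousMap.const ↥S p, fun _ => rfl⟩
  obtain ⟨r, hrpos, hball⟩ := Metric.isOpen_iff.mp hE _ hconst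
  obtain ⟨n, hn⟩ := exists_nat_one_div_lt hrpos
  set a : ℝ := 1 / ((n : ℝ) + 1) with ha
  have hapos : 0 < a := by positivity
  have hTgap : ∀ u ∈ T, u < a + a ^ 2 / 2 → u ≤ a := by
    intro u hu hlt
    rw [hTdef] at hu
    rcases hu with rfl | ⟨k, rfl⟩
    · exact hapos.le
    · by_contra hka
      push_neg at hka
      have hkn : (k : ℝ) + 1 < (n : ℝ) + 1 :=
        lt_of_one_div_lt_one_div (by positivity) hka
      have hkn' : k < n := by
        have : k + 1 < n + 1 := by exact_mod_cast hkn
        omega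
      have hk1n : (k : ℝ) + 1 ≤ (n : ℝ) := by exact_mod_cast Nat.succ_le_of_lt hkn'
      have hnpos : (0 : ℝ) < (n : ℝ) := lt_of_lt_of_le (by positivity) hk1n
      have h1 : 1 / (n : ℝ) ≤ 1 / ((k : ℝ) + 1) :=
        one_div_le_one_div_of_le (by positivity) hk1n
      have e : 1 / (n : ℝ) - (a + a ^ 2 / 2) = ((n : ℝ) + 2) / (2 * (n : ℝ) * ((n : ℝ) + 1) ^ 2) := by
        rw [ha]; field_simp; ring
      have h2 : 0 ≤ 1 / (n : ℝ) - (a + a ^ 2 / 2) := by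
        rw [e]; positivity
      linarith
  have haT : a ∈ T := by rw [hTdef]; exact Set.mem_insert_iff.mpr (Or.inr ⟨n, rfl⟩)
  set Q : ↥Z → Prop := fun y => y.1.1.1 ≤ a ∧ y.1.1.2.2 = (0 : I) with hQ
  have hZcoe : ∀ y : ↥Z, y.1.1.1 ∈ T ∧ dist y.1.1.2.1 p ≤ y.1.1.1 := fun y => y.1.2
  have hI01 : (0 : I) ≠ 1 := fun h => by simpa using congrArg Subtype.val h
  have hsZ : Continuous fun y : ↥Z => y.1.1.1 :=
    continuous_fst.comp (continuous_subtype_val.comp continuous_subtype_val)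
  have htZ : Continuous fun y : ↥Z => y.1.1.2.2 :=
    (continuous_snd.comp continuous_snd).comp (continuous_subtype_val.comp continuous_subtype_val)
  have hxZ : Continuous fun y : ↥Z => y.1.1.2.1 :=
    (continuous_fst.comp continuous_snd).comp (continuous_subtype_val.comp continuous_subtype_val)
  have hfr : ∀ y ∈ frontier {y : ↥Z | Q y}, y.1.1.2.1 = p := by
    intro y hy
    rw [frontier_eq_closure_inter_closure] at hy
    obtain ⟨hy1, hy2⟩ := hy
    have hQy : y.1.1.1 ≤ a ∧ y.1.1.2.2 = (0 : I) := by
      have hcl1 : closure {y : ↥Z | Q y} ⊆ {y : ↥Z | y.1.1.1 ≤ a ∧ y.1.1.2.2 = (0 : I)} := by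
        apply closure_minimal (fun z hz => hz)
        exact (isClosed_le hsZ continuous_const).inter (isClosed_eq htZ continuous_const)
      exact hcl1 hy1
    have hcl2 : closure ({y : ↥Z | Q y}ᶜ) ⊆
        {y : ↥Z | a + a ^ 2 / 2 ≤ y.1.1.1 ∨ y.1.1.2.2 = (1 : I) ∨ y.1.1.2.1 = p} := by
      apply closure_minimal
      · intro z hz
        rcases not_and_or.mp hz with h | h
        · push_neg at h
          left
          by_contra hlt
          push_neg at hlt
          exact absurd (hTgap _ (hZcoe z).1 hlt) (not_le.mpr h)
        · have hz2 : z.1.1.2.2 = (0 : I) ∨ z.1.1.2.2 = (1 : I) ∨ z.1.1.2.1 = p := z.2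
          rcases hz2 with h0 | h1 | hxp
          · exact absurd h0 h
          · exact Or.inr (Or.inl h1)
          · exact Or.inr (Or.inr hxp)
      · exact (isClosed_le continuous_const hsZ).union
          ((isClosed_eq htZ continuous_const).union (isClosed_eq hxZ continuous_const))
    rcases hcl2 hy2 with h | h | h
    · exfalso
      have := hQy.1
      nlinarith [pow_pos hapos 2]
    · exact absurd (hQy.2.symm.trans h) hI01
    · exact h
  set gmap : C(↥Z, X) := ⟨fun y => if Q y then y.1.1.2.1 else p,
    Continuous.if hfr hxZ continuous_const⟩ with hgmap
  have hmem : gmap ∈ Metric.ball (ContinuousMap.const ↥Z p) r := by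
    rw [Metric.mem_ball, ContinuousMap.dist_lt_iff hrpos]
    intro y
    rw [hgmap]
    simp only [ContinuousMap.coe_mk, ContinuousMap.const_apply]
    by_cases hq : Q y
    · rw [if_pos hq]
      calc dist y.1.1.2.1 p ≤ y.1.1.1 := (hZcoe y).2
        _ ≤ a := hq.1
        _ < r := hn
    · rw [if_neg hq]
      simpa using hrpos
  obtain ⟨G, hG⟩ := hball hmem
  have hpU' : p ∈ interior U := mem_interior_iff_mem_nhds.mpr hU
  set K : Set ↥S := (G ⁻¹' interior U)ᶜ with hK
  have hKcompact : IsCompact K :=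
    ((isOpen_interior.preimage G.continuous).isClosed_compl).isCompact
  have hKpos : ∀ y ∈ K, 0 < y.1.1 := by
    intro y hy
    have hyS := hZcoe -- dummy
    have hymem : y.1.1 ∈ T ∧ dist y.1.2.1 p ≤ y.1.1 := y.2
    rcases (hT0 _ hymem.1).lt_or_eq with h | h
    · exact h
    · exfalso
      have hxp : y.1.2.1 = p := by
        have h2 : dist y.1.2.1 p ≤ 0 := by rw [h]; exact hymem.2
        exact dist_le_zero.mp h2
      have hyZ : y ∈ Z := Or.inr (Or.inr hxp)
      apply hy
      show G y ∈ interior U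
      have hGy : G y = gmap ⟨y, hyZ⟩ := hG ⟨y, hyZ⟩
      rw [hGy, hgmap]
      simp only [ContinuousMap.coe_mk]
      split
      · show y.1.2.1 ∈ interior U
        rw [hxp]; exact hpU'
      · exact hpU'
  obtain ⟨sig, hsigpos, hsig⟩ : ∃ sig > 0, ∀ y ∈ K, sig ≤ y.1.1 := by
    rcases K.eq_empty_or_nonempty with hKe | hKne
    · exact ⟨1, one_pos, by simp [hKe]⟩
    · obtain ⟨y₀, hy₀K, hy₀min⟩ := hKcompact.exists_isMinOn hKne hsS.continuousOn
      exact ⟨y₀.1.1, hKpos _ hy₀K, fun y hy => hy₀min hy⟩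
  obtain ⟨m₀, hm₀⟩ := exists_nat_one_div_lt hsigpos
  set m : ℕ := max m₀ n with hm
  set b : ℝ := 1 / ((m : ℝ) + 1) with hb
  have hbpos : 0 < b := by positivity
  have hm₀m : ((m₀ : ℝ) + 1) ≤ (m : ℝ) + 1 := by
    have : m₀ ≤ m := le_max_left m₀ n
    exact_mod_cast Nat.succ_le_succ this
  have hnm : ((n : ℝ) + 1) ≤ (m : ℝ) + 1 := by
    have : n ≤ m := le_max_right m₀ n
    exact_mod_cast Nat.succ_le_succ this
  have hbsig : b < sig :=
    lt_of_le_of_lt (one_div_le_one_div_of_le (by positivity) hm₀m) (by exact_mod_cast hm₀)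
  have hba : b ≤ a := by
    rw [ha, hb]; exact one_div_le_one_div_of_le (by positivity) hnm
  have hbT : b ∈ T := by rw [hTdef]; exact Set.mem_insert_iff.mpr (Or.inr ⟨m, rfl⟩)
  refine ⟨Metric.ball p b, Metric.ball_mem_nhds p hbpos, ?_⟩
  have hclV : ∀ x : X, x ∈ closure (Metric.ball p b) → dist x p ≤ b := fun x hx =>
    Metric.mem_closedBall.mp (Metric.closure_ball_subset_closedBall hx)
  have hmemS : ∀ q : ↥(closure (Metric.ball p b)) × I, ((b, q.1.1, q.2) : ℝ × X × I) ∈ S :=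
    fun q => ⟨hbT, hclV _ q.1.2⟩
  refine ⟨⟨fun q => G ⟨(b, q.1.1, q.2), hmemS q⟩,
    G.continuous.comp (Continuous.subtype_mk (continuous_const.prodMk
      ((continuous_subtype_val.comp continuous_fst).prodMk continuous_snd)) _)⟩,
    ?_, ?_, ?_, ?_⟩
  · intro x
    have hz : (⟨(b, x.1, (0 : I)), hmemS (x, 0)⟩ : ↥S) ∈ Z := Or.inl rfl
    show G ⟨(b, x.1, (0 : I)), hmemS (x, 0)⟩ = x.1
    rw [hG ⟨_, hz⟩, hgmap]
    simp only [ContinuousMap.coe_mk]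
    rw [if_pos ⟨hba, rfl⟩]
  · intro x
    have hz : (⟨(b, x.1, (1 : I)), hmemS (x, 1)⟩ : ↥S) ∈ Z := Or.inr (Or.inl rfl)
    show G ⟨(b, x.1, (1 : I)), hmemS (x, 1)⟩ = p
    rw [hG ⟨_, hz⟩, hgmap]
    simp only [ContinuousMap.coe_mk]
    rw [if_neg (fun h => hI01 h.2.symm)]
  · intro hp t
    have hz : (⟨(b, p, t), hmemS (⟨p, hp⟩, t)⟩ : ↥S) ∈ Z := Or.inr (Or.inr rfl)
    show G ⟨(b, p, t), hmemS (⟨p, hp⟩, t)⟩ = p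
    rw [hG ⟨_, hz⟩, hgmap]
    simp only [ContinuousMap.coe_mk]
    split <;> rfl
  · intro q
    show G ⟨(b, q.1.1, q.2), hmemS q⟩ ∈ U
    have hnotK : (⟨(b, q.1.1, q.2), hmemS q⟩ : ↥S) ∉ K := by
      intro hc
      exact absurd (hsig _ hc) (not_le.mpr hbsig)
    have : (⟨(b, q.1.1, q.2), hmemS q⟩ : ↥S) ∈ G ⁻¹' interior U := by
      by_contra hc
      exact hnotK hc
    exact interior_subset this
end

section
/- Let X be an e-open compact metrizable space with metric ρ. Then for every ε > 0 there exists δ > 0 such that: if Y is compact metrizable, φ₀, φ₁ : Y → X are continuous with ρ(φ₀(y), φ₁(y)) < δ for all y, and Z = {y ∈ Y : φ₀(y) = φ₁(y)}, then there is a homotopy (φₜ)₀≤t≤1 from φ₀ to φ₁ through maps Y → X with ρ(φₜ(y), φₛ(y)) < ε for all s, t ∈ [0,1] and y ∈ Y, and φₜ(z) = φ₀(z) for all z ∈ Z and t ∈ [0,1]. (Local equiconnectedness.) -/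
open Set Filter Topology unitInterval

noncomputable section
namespace EOpenAux

open scoped Classical

/-- the scale set : 0 together with 1/(n+1). -/
def Sset : Set ℝ := insert 0 (Set.range fun n : ℕ => 1 / ((n : ℝ) + 1))

lemma Sset_subset_Icc : Sset ⊆ Icc (0:ℝ) 1 := by
  rintro s (rfl | ⟨n, rfl⟩)
  · exact ⟨le_refl 0, zero_le_one⟩
  · constructor
    · positivity
    · rw [div_le_one (by positivity)]
      have : (0:ℝ) ≤ n := Nat.cast_nonneg n
      linarith

lemma isCompact_Sset : IsCompact Sset :=
  tendsto_one_div_add_atTop_nhds_zero_nat.isCompact_insert_range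

lemma isClosed_Sset : IsClosed Sset := isCompact_Sset.isClosed

lemma Izero_ne_one : (0 : I) ≠ 1 := by
  intro h
  have := congrArg Subtype.val h
  norm_num at this

variable (X : Type) [MetricSpace X] [CompactSpace X]

/-- the multiscale space. -/
def Yset : Set ((X × X) × I × ℝ) :=
  {p | p.2.2 ∈ Sset ∧ dist p.1.1 p.1.2 ≤ p.2.2}

lemma isClosed_Yset : IsClosed (Yset X) := by
  have h1 : IsClosed {p : (X × X) × I × ℝ | p.2.2 ∈ Sset} :=
    isClosed_Sset.preimage (continuous_snd.comp continuous_snd)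
  have h2 : IsClosed {p : (X × X) × I × ℝ | dist p.1.1 p.1.2 ≤ p.2.2} :=
    isClosed_le
      (Continuous.dist (continuous_fst.comp continuous_fst)
        (continuous_snd.comp continuous_fst))
      (continuous_snd.comp continuous_snd)
  exact h1.inter h2

lemma isCompact_Yset : IsCompact (Yset X) := by
  have hK : IsCompact ((univ : Set (X × X)) ×ˢ ((univ : Set I) ×ˢ Icc (0:ℝ) 1)) :=
    isCompact_univ.prod (isCompact_univ.prod isCompact_Icc)
  refine hK.of_isClosed_subset (isClosed_Yset X) ?_
  rintro p ⟨h1, _⟩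
  simp only [Set.mem_prod, mem_univ, true_and]
  exact Sset_subset_Icc h1

/-- the closed subspace where values are prescribed -/
def Zset : Set (Yset X) :=
  {y | y.1.2.1 = 0 ∨ y.1.2.1 = 1 ∨ y.1.1.1 = y.1.1.2}

lemma isClosed_Zset : IsClosed (Zset X) := by
  have cval : Continuous fun y : Yset X => (y.1 : (X × X) × I × ℝ) := continuous_subtype_val
  have h0 : IsClosed {y : Yset X | y.1.2.1 = 0} :=
    isClosed_eq (continuous_fst.comp (continuous_snd.comp cval)) continuous_const
  have h1 : IsClosed {y : Yset X | y.1.2.1 = 1} :=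
    isClosed_eq (continuous_fst.comp (continuous_snd.comp cval)) continuous_const
  have h2 : IsClosed {y : Yset X | y.1.1.1 = y.1.1.2} :=
    isClosed_eq (continuous_fst.comp (continuous_fst.comp cval))
      (continuous_snd.comp (continuous_fst.comp cval))
  have : Zset X = {y : Yset X | y.1.2.1 = 0} ∪ ({y : Yset X | y.1.2.1 = 1} ∪
      {y : Yset X | y.1.1.1 = y.1.1.2}) := by
    ext y; simp [Zset, Set.mem_union]
  rw [this]
  exact h0.union (h1.union h2)

/-- Existence of a connection at some scale `c`. -/
theorem exists_connection (hX : EOpen X) :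
    ∃ c > (0:ℝ), ∃ G : C({q : X × X // dist q.1 q.2 ≤ c} × I, X),
      (∀ q t, q.1.1 = q.1.2 → G (q, t) = q.1.1) ∧
      (∀ q, G (q, 0) = q.1.1) ∧ (∀ q, G (q, 1) = q.1.2) := by
  haveI : CompactSpace (Yset X) := isCompact_iff_compactSpace.mp (isCompact_Yset X)
  haveI : CompactSpace (Zset X) :=
    isCompact_iff_compactSpace.mp ((isClosed_Zset X).isCompact)
  -- base map and its extension
  set f₀ : C(Zset X, X) := ⟨fun z => z.1.1.1.1,
    continuous_fst.comp (continuous_fst.comp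
      (continuous_subtype_val.comp continuous_subtype_val))⟩ with hf₀def
  have hf₀mem : f₀ ∈ {f : C(Zset X, X) | ExtendsTo (Zset X) f} := by
    refine ⟨⟨fun y => y.1.1.1, continuous_fst.comp (continuous_fst.comp continuous_subtype_val)⟩,
      fun z => rfl⟩
  have hEopen := hX (Yset X) (Zset X) (isClosed_Zset X)
  obtain ⟨η, hη, hball⟩ := Metric.isOpen_iff.mp hEopen f₀ hf₀mem
  -- choose the scale
  obtain ⟨n₀, hn₀⟩ := exists_nat_one_div_lt hη
  set n : ℕ := n₀ + 1 with hndef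
  have hnpos : (0:ℝ) < (n:ℝ) := by positivity
  set c : ℝ := 1 / ((n : ℝ) + 1) with hcdef
  have hc : 0 < c := by positivity
  have hcη : c < η := by
    have h1 : (1:ℝ) / ((n:ℝ) + 1) ≤ 1 / ((n₀:ℝ) + 1) := by
      apply one_div_le_one_div_of_le (by positivity)
      push_cast [hndef]; linarith
    exact lt_of_le_of_lt h1 hn₀
  have hcS : c ∈ Sset := Or.inr ⟨n, rfl⟩
  have hcn : c < 1 / (n:ℝ) := by
    rw [hcdef]
    exact one_div_lt_one_div_of_lt hnpos (by linarith)
  set m : ℝ := (c + 1 / (n:ℝ)) / 2 with hmdef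
  have hcm : c < m := by rw [hmdef]; linarith
  have hm_lt : m < 1 / (n:ℝ) := by rw [hmdef]; linarith
  have gap : ∀ s ∈ Sset, s < m → s ≤ c := by
    rintro s (rfl | ⟨k, rfl⟩) hs
    · exact le_of_lt hc
    · by_contra hcon
      push_neg at hcon
      have hk1 : (0:ℝ) < (k:ℝ) + 1 := by positivity
      have : (k:ℝ) + 1 < (n:ℝ) + 1 := by
        rw [hcdef] at hcon
        exact lt_of_one_div_lt_one_div (by positivity) hcon
      have hkn : k < n := by exact_mod_cast (by linarith : (k:ℝ) < (n:ℝ))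
      have hkn' : (k:ℝ) + 1 ≤ (n:ℝ) := by exact_mod_cast Nat.succ_le_of_lt hkn
      have : (1:ℝ) / (n:ℝ) ≤ 1 / ((k:ℝ) + 1) := one_div_le_one_div_of_le hk1 hkn'
      linarith
  -- the perturbed map
  have cval : Continuous fun z : Zset X => (z.1.1 : (X × X) × I × ℝ) :=
    continuous_subtype_val.comp continuous_subtype_val
  have cpa : Continuous fun z : Zset X => z.1.1.1.1 := continuous_fst.comp (continuous_fst.comp cval)
  have cpb : Continuous fun z : Zset X => z.1.1.1.2 := continuous_snd.comp (continuous_fst.comp cval)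
  have cpt : Continuous fun z : Zset X => z.1.1.2.1 := continuous_fst.comp (continuous_snd.comp cval)
  have cps : Continuous fun z : Zset X => z.1.1.2.2 := continuous_snd.comp (continuous_snd.comp cval)
  have hinner_eq : {z : Zset X | z.1.1.2.2 < m} = {z : Zset X | z.1.1.2.2 ≤ c} := by
    ext z
    constructor
    · intro h; exact gap _ z.1.2.1 h
    · intro h; exact lt_of_le_of_lt h hcm
  have hinner_closed : IsClosed {z : Zset X | z.1.1.2.2 < m} := by
    rw [hinner_eq]; exact isClosed_le cps continuous_const
  have hinner_open : IsOpen {z : Zset X | z.1.1.2.2 < m} := isOpen_lt cps continuous_const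
  have hfr : frontier {z : Zset X | z.1.1.2.2 < m} = ∅ := by
    rw [frontier, hinner_closed.closure_eq, hinner_open.interior_eq, diff_self]
  have hinner : Continuous fun z : Zset X =>
      if z.1.1.2.2 < m then z.1.1.1.2 else z.1.1.1.1 := by
    refine Continuous.if ?_ cpb cpa
    intro a ha
    rw [hfr] at ha
    exact absurd ha (notMem_empty a)
  have houter : ∀ z ∈ frontier {z : Zset X | z.1.1.2.1 = 1},
      (if z.1.1.2.2 < m then z.1.1.1.2 else z.1.1.1.1) = z.1.1.1.1 := by
    intro z hz
    have h1 : z.1.1.2.1 = 1 := by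
      have hcl : IsClosed {z : Zset X | z.1.1.2.1 = 1} := isClosed_eq cpt continuous_const
      have := frontier_subset_closure (s := {z : Zset X | z.1.1.2.1 = 1}) hz
      rwa [hcl.closure_eq] at this
    have h2 : z.1.1.1.1 = z.1.1.1.2 := by
      have hz2 : z ∈ closure ({z : Zset X | z.1.1.2.1 = 1}ᶜ) := by
        rw [closure_compl]
        exact hz.2
      have hsub : ({z : Zset X | z.1.1.2.1 = 1}ᶜ : Set (Zset X)) ⊆
          {z : Zset X | z.1.1.2.1 = 0} ∪ {z : Zset X | z.1.1.1.1 = z.1.1.1.2} := by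
        intro w hw
        rcases w.2 with h | h | h
        · exact Or.inl h
        · exact absurd h hw
        · exact Or.inr h
      have hcl : IsClosed ({z : Zset X | z.1.1.2.1 = 0} ∪
          {z : Zset X | z.1.1.1.1 = z.1.1.1.2}) :=
        (isClosed_eq cpt continuous_const).union (isClosed_eq cpa cpb)
      have hmem := (closure_minimal hsub hcl) hz2
      rcases hmem with h | h
      · exact absurd (h.symm.trans h1) Izero_ne_one
      · exact h
    rw [h2]
    split_ifs <;> rfl
  set hn : C(Zset X, X) := ⟨fun z =>
      if z.1.1.2.1 = 1 then (if z.1.1.2.2 < m then z.1.1.1.2 else z.1.1.1.1) else z.1.1.1.1,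
    Continuous.if houter hinner cpa⟩ with hhndef
  have hdist : dist hn f₀ < η := by
    rw [ContinuousMap.dist_lt_iff hη]
    intro z
    simp only [hhndef, hf₀def, ContinuousMap.coe_mk]
    split_ifs with h1 h2
    · have hb : dist z.1.1.1.1 z.1.1.1.2 ≤ z.1.1.2.2 := z.1.2.2
      have hsc : z.1.1.2.2 ≤ c := gap _ z.1.2.1 h2
      rw [dist_comm]
      exact lt_of_le_of_lt (le_trans hb hsc) hcη
    · rw [dist_self]; exact hη
    · rw [dist_self]; exact hη
  have hext : ExtendsTo (Zset X) hn := hball (by rwa [Metric.mem_ball])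
  obtain ⟨g, hg⟩ := hext
  -- build the connection from the fiber s = c
  refine ⟨c, hc, ?_⟩
  have hmemY : ∀ (q : {q : X × X // dist q.1 q.2 ≤ c}) (t : I),
      ((q.1, (t, c)) : (X × X) × I × ℝ) ∈ Yset X := fun q t => ⟨hcS, q.2⟩
  set e : {q : X × X // dist q.1 q.2 ≤ c} × I → Yset X :=
    fun w => ⟨(w.1.1, (w.2, c)), hmemY w.1 w.2⟩ with hedef
  have he : Continuous e := by
    refine Continuous.subtype_mk ?_ _
    exact (continuous_subtype_val.comp continuous_fst).prodMk
      (continuous_snd.prodMk continuous_const)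
  refine ⟨⟨fun w => g (e w), g.continuous.comp he⟩, ?_, ?_, ?_⟩
  · -- diagonal stationarity
    intro q t h
    have hzmem : e (q, t) ∈ Zset X := Or.inr (Or.inr h)
    have hval := hg ⟨e (q, t), hzmem⟩
    simp only [ContinuousMap.coe_mk]
    rw [hval]
    show (if (t : I) = 1 then (if c < m then q.1.2 else q.1.1) else q.1.1) = q.1.1
    split_ifs <;> first | rfl | exact h.symm
  · -- t = 0
    intro q
    have hzmem : e (q, 0) ∈ Zset X := Or.inl rfl
    have hval := hg ⟨e (q, 0), hzmem⟩
    simp only [ContinuousMap.coe_mk]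
    rw [hval]
    show (if (0 : I) = 1 then (if c < m then q.1.2 else q.1.1) else q.1.1) = q.1.1
    rw [if_neg Izero_ne_one]
  · -- t = 1
    intro q
    have hzmem : e (q, 1) ∈ Zset X := Or.inr (Or.inl rfl)
    have hval := hg ⟨e (q, 1), hzmem⟩
    simp only [ContinuousMap.coe_mk]
    rw [hval]
    show (if (1 : I) = 1 then (if c < m then q.1.2 else q.1.1) else q.1.1) = q.1.2
    rw [if_pos rfl, if_pos hcm]

end EOpenAux
/-- An e-open space is locally equiconnected: for every `ε > 0` there is `δ > 0` such that any
two `δ`-close maps `φ₀, φ₁ : Y → X` are joined by a homotopy through maps pairwise `ε`-close,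
which is stationary on the set where `φ₀ = φ₁`. -/
theorem eOpen_locallyEquiconnected {X : Type} [MetricSpace X] [CompactSpace X]
    (hX : EOpen X) :
    ∀ ε > (0 : ℝ), ∃ δ > (0 : ℝ),
      ∀ (Y : Type) [MetricSpace Y] [CompactSpace Y] (φ₀ φ₁ : C(Y, X)),
        (∀ y : Y, dist (φ₀ y) (φ₁ y) < δ) →
        ∃ H : C(Y × I, X),
          (∀ y : Y, H (y, 0) = φ₀ y) ∧
          (∀ y : Y, H (y, 1) = φ₁ y) ∧
          (∀ (s t : I) (y : Y), dist (H (y, s)) (H (y, t)) < ε) ∧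
          (∀ y : Y, φ₀ y = φ₁ y → ∀ t : I, H (y, t) = φ₀ y) := by
  intro ε hε
  obtain ⟨c, hc, G, hGdiag, hG0, hG1⟩ := EOpenAux.exists_connection X hX
  haveI : CompactSpace {q : X × X // dist q.1 q.2 ≤ c} := by
    apply isCompact_iff_compactSpace.mp
    exact (isClosed_le (Continuous.dist continuous_fst continuous_snd)
      continuous_const).isCompact
  -- smallness of tracks near the diagonal, by compactness
  have hsmall : ∃ δ > (0:ℝ), δ ≤ c ∧ ∀ (q : {q : X × X // dist q.1 q.2 ≤ c}) (t : I),
      dist q.1.1 q.1.2 < δ → dist (G (q, t)) q.1.1 < ε / 2 := by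
    set K : Set ({q : X × X // dist q.1 q.2 ≤ c} × I) :=
      {w | ε / 2 ≤ dist (G w) w.1.1.1} with hKdef
    have hKclosed : IsClosed K := by
      apply isClosed_le continuous_const
      exact Continuous.dist (map_continuous G)
        (continuous_fst.comp (continuous_subtype_val.comp continuous_fst))
    rcases K.eq_empty_or_nonempty with hKe | hKne
    · refine ⟨c, hc, le_refl c, fun q t _ => ?_⟩
      by_contra hcon
      push_neg at hcon
      have : (q, t) ∈ K := hcon
      rw [hKe] at this
      exact this
    · have hKcomp : IsCompact K := hKclosed.isCompact
      have hfc : Continuous fun w : {q : X × X // dist q.1 q.2 ≤ c} × I =>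
          dist w.1.1.1 w.1.1.2 := by fun_prop
      obtain ⟨w₀, hw₀K, hw₀min⟩ := hKcomp.exists_isMinOn hKne hfc.continuousOn
      have hd₀pos : 0 < dist w₀.1.1.1 w₀.1.1.2 := by
        rcases lt_or_eq_of_le (dist_nonneg (x := w₀.1.1.1) (y := w₀.1.1.2)) with h | h
        · exact h
        · exfalso
          have heq : w₀.1.1.1 = w₀.1.1.2 := dist_eq_zero.mp h.symm
          have := hGdiag w₀.1 w₀.2 heq
          have hw : G w₀ = w₀.1.1.1 := this
          have := hw₀K
          rw [hKdef] at this
          simp only [Set.mem_setOf_eq, hw, dist_self] at this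
          linarith
      refine ⟨min (dist w₀.1.1.1 w₀.1.1.2) c, lt_min hd₀pos hc, min_le_right _ _,
        fun q t hlt => ?_⟩
      by_contra hcon
      push_neg at hcon
      have hmem : (q, t) ∈ K := hcon
      have hmin' : dist w₀.1.1.1 w₀.1.1.2 ≤ dist q.1.1 q.1.2 := hw₀min hmem
      have h3 := min_le_left (dist w₀.1.1.1 w₀.1.1.2) c
      have h4 := lt_of_lt_of_le hlt h3
      linarith
  obtain ⟨δ, hδ, hδc, hδsmall⟩ := hsmall
  refine ⟨δ, hδ, ?_⟩
  intro Y _ _ φ₀ φ₁ hφ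
  set q : Y → {q : X × X // dist q.1 q.2 ≤ c} :=
    fun y => ⟨(φ₀ y, φ₁ y), le_of_lt (lt_of_lt_of_le (hφ y) hδc)⟩ with hqdef
  have hq1 : Continuous q := by
    rw [hqdef]
    exact Continuous.subtype_mk (φ₀.continuous.prodMk φ₁.continuous) _
  have hqcont : Continuous fun w : Y × I => (q w.1, w.2) :=
    (hq1.comp continuous_fst).prodMk continuous_snd
  refine ⟨⟨fun w => G (q w.1, w.2), (map_continuous G).comp hqcont⟩, ?_, ?_, ?_, ?_⟩
  · intro y
    exact hG0 (q y)
  · intro y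
    exact hG1 (q y)
  · intro s t y
    simp only [ContinuousMap.coe_mk]
    have h1 : dist (G (q y, s)) (φ₀ y) < ε / 2 := hδsmall (q y) s (hφ y)
    have h2 : dist (G (q y, t)) (φ₀ y) < ε / 2 := hδsmall (q y) t (hφ y)
    calc dist (G (q y, s)) (G (q y, t))
        ≤ dist (G (q y, s)) (φ₀ y) + dist (φ₀ y) (G (q y, t)) := dist_triangle _ _ _
      _ = dist (G (q y, s)) (φ₀ y) + dist (G (q y, t)) (φ₀ y) := by rw [dist_comm (φ₀ y)]
      _ < ε / 2 + ε / 2 := by linarith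
      _ = ε := by ring
  · intro y h t
    exact hGdiag (q y) t h
end
end
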